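/- arXiv:math/9402209 — 5 statements merged into one kernel-verified Lean document; each statement's English description precedes it below -/
import Mathlib

section
/- Let n ≥ 1 and N be natural numbers, let E be a complex normed vector space with dim E = n, let ε > 0, and let T : ℓ₂^N → E be a bounded linear map, where ℓ₂^N is the N-dimensional complex Euclidean space with standard orthonormal basis (e_i)_{i≤N}. Then the number of indices i ≤ N with ‖T e_i‖ > ε is at most n³‖T‖²/ε². -/
open scoped InnerProductSpace

private lemma parseval_onb {F : Type*} [NormedAddCommGroup F] [InnerProductSpace ℂ F]
    {ι : Type*} [Fintype ι] (b : OrthonormalBasis ι ℂ F) (x : F) :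
    ∑ i, ‖⟪b i, x⟫_ℂ‖ ^ 2 = ‖x‖ ^ 2 := by
  have h1 : ‖b.repr x‖ = ‖x‖ := b.repr.norm_map x
  have h2 : ‖b.repr x‖ ^ 2 = ∑ i, ‖b.repr x i‖ ^ 2 := PiLp.norm_sq_eq_of_L2 _ (b.repr x)
  simp_rw [← b.repr_apply_apply]
  rw [← h2, h1]

set_option maxHeartbeats 1000000 in
/-- If `E` is an `n`-dimensional complex normed space (`n ≥ 1`), `ε > 0` and
`T : ℓ₂^N → E` is a bounded linear map, then the number of standard basis vectors `e_i`
with `‖T e_i‖ > ε` is at most `n³ ‖T‖² / ε²`. -/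
theorem lemma2_count_bound (n N : ℕ) (hn : 1 ≤ n)
    (E : Type*) [NormedAddCommGroup E] [NormedSpace ℂ E]
    (hE : Module.finrank ℂ E = n)
    (ε : ℝ) (hε : 0 < ε)
    (T : EuclideanSpace ℂ (Fin N) →L[ℂ] E) :
    ((Finset.univ.filter fun i : Fin N =>
        ε < ‖T (EuclideanSpace.single i (1 : ℂ))‖).card : ℝ)
      ≤ (n : ℝ) ^ 3 * ‖T‖ ^ 2 / ε ^ 2 := by
  classical
  haveI : FiniteDimensional ℂ E :=
    Module.finite_of_finrank_pos (by rw [hE]; exact hn)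
  set S := Finset.univ.filter fun i : Fin N =>
      ε < ‖T (EuclideanSpace.single i (1 : ℂ))‖ with hS
  by_cases hT : ‖T‖ = 0
  · have hempty : S = ∅ := by
      rw [hS, Finset.filter_eq_empty_iff]
      intro i _
      have h := T.le_opNorm (EuclideanSpace.single i (1 : ℂ))
      rw [hT, zero_mul] at h
      intro hc; linarith
    rw [hempty]
    simp only [Finset.card_empty, Nat.cast_zero]
    positivity
  have hTpos : 0 < ‖T‖ := lt_of_le_of_ne (norm_nonneg T) (Ne.symm hT)
  set K : Submodule ℂ (EuclideanSpace ℂ (Fin N)) := LinearMap.ker (T : EuclideanSpace ℂ (Fin N) →ₗ[ℂ] E) with hK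
  set W := Kᗮ with hW
  set e : Fin N → EuclideanSpace ℂ (Fin N) :=
    fun i => EuclideanSpace.single i (1 : ℂ) with he
  -- T x = T (orthogonal projection of x onto W)
  have hTP : ∀ x : EuclideanSpace ℂ (Fin N), T x = T (W.orthogonalProjectionOnto x : _) := by
    intro x
    have hmem : x - (W.orthogonalProjectionOnto x : _) ∈ Wᗮ :=
      Submodule.sub_starProjection_mem_orthogonal x
    have hWK : Wᗮ = K := by rw [hW]; exact Submodule.orthogonal_orthogonal K
    rw [hWK] at hmem
    have h0 : T (x - (W.orthogonalProjectionOnto x : _)) = 0 := hmem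
    rw [map_sub] at h0
    exact sub_eq_zero.mp h0
  -- dim W ≤ n
  have hWdim : Module.finrank ℂ W ≤ n := by
    have h1 : Module.finrank ℂ K + Module.finrank ℂ W = N := by
      simpa using Submodule.finrank_add_finrank_orthogonal K
    have h2 : Module.finrank ℂ (LinearMap.range (T : EuclideanSpace ℂ (Fin N) →ₗ[ℂ] E))
        + Module.finrank ℂ K = N := by
      simpa using LinearMap.finrank_range_add_finrank_ker
        (T : EuclideanSpace ℂ (Fin N) →ₗ[ℂ] E)
    have h3 : Module.finrank ℂ W
        = Module.finrank ℂ (LinearMap.range (T : EuclideanSpace ℂ (Fin N) →ₗ[ℂ] E)) := by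
      omega
    rw [h3, ← hE]
    exact Submodule.finrank_le _
  -- trace identity
  set b := stdOrthonormalBasis ℂ W with hb
  have htrace : ∑ i : Fin N, ‖(W.orthogonalProjectionOnto (e i) : EuclideanSpace ℂ (Fin N))‖ ^ 2
      = (Module.finrank ℂ W : ℝ) := by
    have hterm : ∀ i : Fin N,
        ‖(W.orthogonalProjectionOnto (e i) : EuclideanSpace ℂ (Fin N))‖ ^ 2
        = ∑ k, ‖⟪((b k : EuclideanSpace ℂ (Fin N))), e i⟫_ℂ‖ ^ 2 := by
      intro i
      have hp := parseval_onb b (W.orthogonalProjectionOnto (e i))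
      rw [Submodule.norm_coe, ← hp]
      refine Finset.sum_congr rfl fun k _ => ?_
      rw [Submodule.inner_orthogonalProjectionOnto_eq_of_mem_left]
    simp_rw [hterm]
    rw [Finset.sum_comm]
    have hcol : ∀ k, ∑ i : Fin N,
        ‖⟪((b k : EuclideanSpace ℂ (Fin N))), e i⟫_ℂ‖ ^ 2 = (1 : ℝ) := by
      intro k
      have hnorm : ‖((b k : EuclideanSpace ℂ (Fin N)))‖ = 1 := by
        rw [Submodule.norm_coe]
        exact b.orthonormal.1 k
      calc ∑ i : Fin N, ‖⟪((b k : EuclideanSpace ℂ (Fin N))), e i⟫_ℂ‖ ^ 2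
          = ∑ i : Fin N, ‖⟪(EuclideanSpace.basisFun (Fin N) ℂ) i,
              ((b k : EuclideanSpace ℂ (Fin N)))⟫_ℂ‖ ^ 2 := by
            refine Finset.sum_congr rfl fun i _ => ?_
            rw [← norm_inner_symm]
            congr 2
            simp [he, EuclideanSpace.basisFun_apply]
        _ = ‖((b k : EuclideanSpace ℂ (Fin N)))‖ ^ 2 := parseval_onb _ _
        _ = 1 := by rw [hnorm]; ring
    simp_rw [hcol]
    simp
  -- pointwise lower bound on projections of bad vectors
  have hbound : ∀ i ∈ S, (ε / ‖T‖) ^ 2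
      ≤ ‖(W.orthogonalProjectionOnto (e i) : EuclideanSpace ℂ (Fin N))‖ ^ 2 := by
    intro i hi
    rw [hS, Finset.mem_filter] at hi
    have h1 : ε < ‖T (e i)‖ := hi.2
    have h2 : ‖T (e i)‖ ≤ ‖T‖ *
        ‖(W.orthogonalProjectionOnto (e i) : EuclideanSpace ℂ (Fin N))‖ := by
      rw [hTP (e i)]; exact T.le_opNorm _
    have h3 : ε / ‖T‖ ≤ ‖(W.orthogonalProjectionOnto (e i) : EuclideanSpace ℂ (Fin N))‖ := by
      rw [div_le_iff₀ hTpos]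
      nlinarith
    exact pow_le_pow_left₀ (by positivity) h3 2
  have hsum : (S.card : ℝ) * (ε / ‖T‖) ^ 2 ≤ (Module.finrank ℂ W : ℝ) := by
    calc (S.card : ℝ) * (ε / ‖T‖) ^ 2 = ∑ _i ∈ S, (ε / ‖T‖) ^ 2 := by
          rw [Finset.sum_const, nsmul_eq_mul]
      _ ≤ ∑ i ∈ S, ‖(W.orthogonalProjectionOnto (e i) : EuclideanSpace ℂ (Fin N))‖ ^ 2 :=
          Finset.sum_le_sum hbound
      _ ≤ ∑ i : Fin N, ‖(W.orthogonalProjectionOnto (e i) : EuclideanSpace ℂ (Fin N))‖ ^ 2 :=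
          Finset.sum_le_sum_of_subset_of_nonneg (Finset.subset_univ S)
            (fun i _ _ => by positivity)
      _ = _ := htrace
  have hWn : (Module.finrank ℂ W : ℝ) ≤ (n : ℝ) := by exact_mod_cast hWdim
  have hn1 : (1 : ℝ) ≤ (n : ℝ) := by exact_mod_cast hn
  have hmain : (S.card : ℝ) ≤ (n : ℝ) * ‖T‖ ^ 2 / ε ^ 2 := by
    rw [le_div_iff₀ (by positivity)]
    have hdiv : (S.card : ℝ) * (ε ^ 2 / ‖T‖ ^ 2) ≤ (n : ℝ) := by
      rw [← div_pow]; linarith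
    have hT2 : 0 < ‖T‖ ^ 2 := by positivity
    calc (S.card : ℝ) * ε ^ 2 = ((S.card : ℝ) * (ε ^ 2 / ‖T‖ ^ 2)) * ‖T‖ ^ 2 := by
          rw [mul_assoc, div_mul_cancel₀ _ hT2.ne']
      _ ≤ (n : ℝ) * ‖T‖ ^ 2 := by
          exact mul_le_mul_of_nonneg_right hdiv hT2.le
  calc (S.card : ℝ) ≤ (n : ℝ) * ‖T‖ ^ 2 / ε ^ 2 := hmain
    _ ≤ (n : ℝ) ^ 3 * ‖T‖ ^ 2 / ε ^ 2 := by
        gcongr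
        have h2 : (1 : ℝ) ≤ (n : ℝ) ^ 2 := one_le_pow₀ hn1
        nlinarith
end

section
/- For every n ≥ 1, every ε > 0 and every K > 0 there exists N₀ ∈ ℕ with the following property: for every N > N₀ and every linear map T : T_N → T_N with operator norm ‖T‖ ≤ K, there exist indices σ(1) < ψ(1) < σ(2) < ψ(2) < ⋯ < σ(n) < ψ(n) in {1, …, N} and a scalar λ ∈ ℂ such that for every A ∈ T_n, ‖C(T(J(A))) − λ A‖ ≤ ε ‖A‖, where J(A) ∈ T_N is the matrix with (J(A))(σ(i), ψ(j)) = A(i,j) for all 1 ≤ i ≤ j ≤ n and all other entries 0, and for B ∈ T_N, C(B) ∈ T_n is the matrix with (C(B))(i,j) = B(σ(i), ψ(j)). -/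
open Finset

theorem myRamsey {κ : Type} [Fintype κ] [DecidableEq κ] [Nonempty κ] :
    ∀ r m : ℕ, ∃ Nr : ℕ, ∀ (α : Type) [LinearOrder α] (S : Finset α) (f : Finset α → κ),
      Nr ≤ S.card →
      ∃ M : Finset α, M ⊆ S ∧ M.card = m ∧ ∃ c : κ, ∀ t ⊆ M, t.card = r → f t = c := by
  intro r
  induction r with
  | zero =>
    intro m
    refine ⟨m, fun α _ S f hS => ?_⟩
    obtain ⟨M, hMS, hMcard⟩ := Finset.exists_subset_card_eq hS
    refine ⟨M, hMS, hMcard, f ∅, fun t ht htc => ?_⟩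
    rw [Finset.card_eq_zero] at htc
    rw [htc]
  | succ r ih =>
    have tail : ∀ L : ℕ, ∃ NL : ℕ, ∀ (α : Type) [LinearOrder α] (S : Finset α)
        (f : Finset α → κ), NL ≤ S.card →
        ∃ T : Finset α, T ⊆ S ∧ T.card = L ∧ ∃ c : α → κ,
          ∀ a ∈ T, ∀ s ⊆ T.filter (a < ·), s.card = r → f (insert a s) = c a := by
      intro L
      induction L with
      | zero =>
        exact ⟨0, fun α _ S f _ => ⟨∅, Finset.empty_subset _, Finset.card_empty,
          fun _ => Classical.arbitrary κ, by simp⟩⟩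
      | succ L ihL =>
        obtain ⟨NL, hNL⟩ := ihL
        obtain ⟨NR, hNR⟩ := ih NL
        refine ⟨NR + 1, fun α _ S f hS => ?_⟩
        have hSne : S.Nonempty := Finset.card_pos.mp (by omega)
        set a := S.min' hSne with ha
        have haS : a ∈ S := S.min'_mem hSne
        have hcard : NR ≤ (S.erase a).card := by
          rw [Finset.card_erase_of_mem haS]; omega
        obtain ⟨B, hBS, hBcard, ca, hBmono⟩ := hNR α (S.erase a) (fun s => f (insert a s)) hcard
        obtain ⟨T', hT'B, hT'card, c', hT'⟩ := hNL α B f (le_of_eq hBcard.symm)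
        have haT' : a ∉ T' := fun h => (Finset.mem_erase.mp (hBS (hT'B h))).1 rfl
        refine ⟨insert a T', ?_, ?_, fun z => if z = a then ca else c' z, ?_⟩
        · intro z hz
          rcases Finset.mem_insert.mp hz with rfl | hz
          · exact haS
          · exact Finset.mem_of_mem_erase (hBS (hT'B hz))
        · rw [Finset.card_insert_of_notMem haT', hT'card]
        · intro b hb s hs hscard
          rcases Finset.mem_insert.mp hb with rfl | hb
          · simp only [if_pos rfl]
            refine hBmono s ?_ hscard
            intro z hz
            have := hs hz
            rw [Finset.mem_filter, Finset.mem_insert] at this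
            rcases this.1 with rfl | h1
            · exact absurd this.2 (lt_irrefl _)
            · exact hT'B h1
          · have hba : b ≠ a := by
              rintro rfl
              exact haT' hb
            simp only [if_neg hba]
            refine hT' b hb s ?_ hscard
            intro z hz
            have := hs hz
            rw [Finset.mem_filter, Finset.mem_insert] at this
            rcases this.1 with rfl | h1
            · exfalso
              have hbS : b ∈ S := Finset.mem_of_mem_erase (hBS (hT'B hb))
              exact absurd this.2 (not_lt.mpr (S.min'_le b hbS))
            · rw [Finset.mem_filter]
              exact ⟨h1, this.2⟩
    intro m
    obtain ⟨NT, hNT⟩ := tail (Fintype.card κ * (m - 1) + 1)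
    refine ⟨NT, fun α _ S f hS => ?_⟩
    obtain ⟨T, hTS, hTcard, c, hc⟩ := hNT α S f hS
    have pig : ∃ k₀ : κ, m ≤ (T.filter (fun z => c z = k₀)).card := by
      by_contra h
      push_neg at h
      have : T.card = ∑ k : κ, (T.filter (fun z => c z = k)).card :=
        Finset.card_eq_sum_card_fiberwise (fun x _ => Finset.mem_univ (c x))
      have hle : ∑ k : κ, (T.filter (fun z => c z = k)).card ≤ Fintype.card κ * (m - 1) := by
        calc ∑ k : κ, (T.filter (fun z => c z = k)).card
            ≤ ∑ _k : κ, (m - 1) := Finset.sum_le_sum (fun k _ => by have := h k; omega)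
          _ = Fintype.card κ * (m - 1) := by rw [Finset.sum_const, smul_eq_mul, Fintype.card]
      omega
    obtain ⟨k₀, hk₀⟩ := pig
    obtain ⟨M, hMsub, hMcard⟩ := Finset.exists_subset_card_eq hk₀
    refine ⟨M, fun z hz => hTS (Finset.mem_of_mem_filter z (hMsub hz)), hMcard, k₀, ?_⟩
    intro t ht htcard
    have htne : t.Nonempty := Finset.card_pos.mp (by omega)
    set b := t.min' htne with hb
    have hbt : b ∈ t := t.min'_mem htne
    have hbM : b ∈ M := ht hbt
    have hbT : b ∈ T := Finset.mem_of_mem_filter b (hMsub hbM)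
    have hstep : f t = c b := by
      have : t = insert b (t.erase b) := (Finset.insert_erase hbt).symm
      rw [this]
      refine hc b hbT (t.erase b) ?_ ?_
      · intro z hz
        rw [Finset.mem_filter]
        have hzt : z ∈ t := Finset.mem_of_mem_erase hz
        refine ⟨Finset.mem_of_mem_filter z (hMsub (ht hzt)), ?_⟩
        · exact lt_of_le_of_ne (t.min'_le z hzt) (Ne.symm (Finset.ne_of_mem_erase hz))
      · rw [Finset.card_erase_of_mem hbt]; omega
    rw [hstep]
    exact (Finset.mem_filter.mp (hMsub hbM)).2


open scoped Matrix.Norms.L2Operator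

namespace TCaux

open Matrix

variable {n : ℕ}

lemma euclid_sq_norm (y : EuclideanSpace ℂ (Fin n)) : ‖y‖ ^ 2 = ∑ r, ‖y r‖ ^ 2 := by
  rw [EuclideanSpace.norm_eq, Real.sq_sqrt]
  positivity

lemma coordE (x : EuclideanSpace ℂ (Fin n)) (i : Fin n) : ‖x i‖ ≤ ‖x‖ := by
  have h1 : ‖x i‖ ^ 2 ≤ ‖x‖ ^ 2 := by
    rw [euclid_sq_norm]
    exact Finset.single_le_sum (f := fun r => ‖x r‖ ^ 2) (fun r _ => by positivity)
      (Finset.mem_univ i)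
  nlinarith [norm_nonneg (x i), norm_nonneg x]

lemma col_l2 (B : Matrix (Fin n) (Fin n) ℂ) (Q : Finset (Fin n)) (s : Fin n) :
    ∑ r ∈ Q, ‖B r s‖ ^ 2 ≤ ‖B‖ ^ 2 := by
  set x : EuclideanSpace ℂ (Fin n) := EuclideanSpace.single s 1 with hxdef
  have hx : ‖x‖ = 1 := by simp [hxdef, EuclideanSpace.norm_single]
  have h1 : ‖(EuclideanSpace.equiv (Fin n) ℂ).symm (B *ᵥ x)‖ ≤ ‖B‖ * ‖x‖ :=
    Matrix.l2_opNorm_mulVec B x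
  rw [hx, mul_one] at h1
  have hmv : ∀ r, (B *ᵥ (x : Fin n → ℂ)) r = B r s := by
    intro r
    simp only [Matrix.mulVec, dotProduct, hxdef]
    rw [Finset.sum_eq_single s]
    · simp [EuclideanSpace.single_apply]
    · intro b _ hb
      simp [EuclideanSpace.single_apply, hb]
    · simp
  have h2 : ‖(EuclideanSpace.equiv (Fin n) ℂ).symm (B *ᵥ x)‖ ^ 2 = ∑ r, ‖B r s‖ ^ 2 := by
    rw [euclid_sq_norm]
    refine Finset.sum_congr rfl fun r _ => ?_
    rw [show ((EuclideanSpace.equiv (Fin n) ℂ).symm (B *ᵥ x)) r = (B *ᵥ (x : Fin n → ℂ)) r from rfl,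
      hmv r]
  calc ∑ r ∈ Q, ‖B r s‖ ^ 2 ≤ ∑ r, ‖B r s‖ ^ 2 :=
        Finset.sum_le_sum_of_subset_of_nonneg (Finset.subset_univ Q) (fun r _ _ => by positivity)
    _ = ‖(EuclideanSpace.equiv (Fin n) ℂ).symm (B *ᵥ x)‖ ^ 2 := h2.symm
    _ ≤ ‖B‖ ^ 2 := by nlinarith [norm_nonneg ((EuclideanSpace.equiv (Fin n) ℂ).symm (B *ᵥ x))]

lemma row_l2 (B : Matrix (Fin n) (Fin n) ℂ) (Q : Finset (Fin n)) (r : Fin n) :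
    ∑ s ∈ Q, ‖B r s‖ ^ 2 ≤ ‖B‖ ^ 2 := by
  have h := col_l2 Bᴴ Q r
  rw [Matrix.l2_opNorm_conjTranspose] at h
  refine le_trans (le_of_eq ?_) h
  refine Finset.sum_congr rfl fun s _ => ?_
  rw [Matrix.conjTranspose_apply, norm_star]

lemma entry_le (B : Matrix (Fin n) (Fin n) ℂ) (r s : Fin n) : ‖B r s‖ ≤ ‖B‖ := by
  have h := col_l2 B {r} s
  rw [Finset.sum_singleton] at h
  nlinarith [norm_nonneg (B r s), norm_nonneg B]

lemma std_le (p q : Fin n) (c : ℂ) : ‖Matrix.single p q c‖ ≤ ‖c‖ := by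
  rw [Matrix.l2_opNorm_def]
  refine ContinuousLinearMap.opNorm_le_bound _ (norm_nonneg c) fun x => ?_
  have happ : ((Matrix.toEuclideanLin.trans LinearMap.toContinuousLinearMap)
      (Matrix.single p q c)) x = Matrix.toEuclideanLin (Matrix.single p q c) x :=
    rfl
  rw [happ, Matrix.toEuclideanLin_apply]
  have hmv : ∀ r, (Matrix.single p q c *ᵥ (x : Fin n → ℂ)) r
      = if r = p then c * x q else 0 := by
    intro r
    simp only [Matrix.mulVec, dotProduct, Matrix.single, Matrix.of_apply]
    rw [Finset.sum_eq_single q]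
    · by_cases h : r = p
      · simp [h]
      · rw [if_neg h]
        rw [if_neg (fun hc => h hc.1.symm), zero_mul]
    · intro b _ hb
      rw [if_neg, zero_mul]
      exact fun hc => hb hc.2.symm
    · simp
  have hn2 : ‖(WithLp.equiv 2 (Fin n → ℂ)).symm (Matrix.single p q c *ᵥ x)‖ ^ 2
      = ‖c * x q‖ ^ 2 := by
    rw [euclid_sq_norm]
    rw [Finset.sum_eq_single p]
    · rw [show ((WithLp.equiv 2 (Fin n → ℂ)).symm (Matrix.single p q c *ᵥ x)) p
          = (Matrix.single p q c *ᵥ (x : Fin n → ℂ)) p from rfl, hmv p, if_pos rfl]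
    · intro b _ hb
      rw [show ((WithLp.equiv 2 (Fin n → ℂ)).symm (Matrix.single p q c *ᵥ x)) b
          = (Matrix.single p q c *ᵥ (x : Fin n → ℂ)) b from rfl, hmv b, if_neg hb]
      simp
    · simp
  have hb : ‖(WithLp.equiv 2 (Fin n → ℂ)).symm (Matrix.single p q c *ᵥ x)‖ = ‖c * x q‖ := by
    have h0 := norm_nonneg ((WithLp.equiv 2 (Fin n → ℂ)).symm (Matrix.single p q c *ᵥ x))
    nlinarith [norm_nonneg (c * x q)]
  show ‖(WithLp.equiv 2 (Fin n → ℂ)).symm (Matrix.single p q c *ᵥ x)‖ ≤ ‖c‖ * ‖x‖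
  rw [hb, norm_mul]
  exact mul_le_mul_of_nonneg_left (coordE x q) (norm_nonneg c)

lemma norm_le_sum_entries (B : Matrix (Fin n) (Fin n) ℂ) : ‖B‖ ≤ ∑ r, ∑ s, ‖B r s‖ := by
  conv_lhs => rw [Matrix.matrix_eq_sum_single B]
  refine le_trans (norm_sum_le _ _) ?_
  refine Finset.sum_le_sum fun r _ => ?_
  refine le_trans (norm_sum_le _ _) ?_
  exact Finset.sum_le_sum fun s _ => std_le r s (B r s)

end TCaux


namespace TCaux

noncomputable def cellIdx (K : ℝ) (G : ℕ) (x : ℝ) : Fin (G + 1) :=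
  ⟨min (⌊(x + K) / (2 * K) * G⌋₊) G, Nat.lt_succ_of_le (min_le_right _ _)⟩

noncomputable def cell (K : ℝ) (G : ℕ) (z : ℂ) : Fin (G + 1) × Fin (G + 1) :=
  (cellIdx K G z.re, cellIdx K G z.im)

lemma cellIdx_close {K : ℝ} {G : ℕ} (hK : 0 < K) (hG : 0 < G) {x y : ℝ}
    (hx : |x| ≤ K) (hy : |y| ≤ K) (h : cellIdx K G x = cellIdx K G y) :
    |x - y| ≤ 2 * K / G := by
  have hGpos : (0:ℝ) < G := by exact_mod_cast hG
  have key : ∀ z : ℝ, |z| ≤ K → (0 ≤ (z + K) / (2 * K) ∧ (z + K) / (2 * K) ≤ 1) := by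
    intro z hz
    rw [abs_le] at hz
    constructor
    · apply div_nonneg (by linarith) (by linarith)
    · rw [div_le_one (by linarith)]; linarith
  obtain ⟨hx0, hx1⟩ := key x hx
  obtain ⟨hy0, hy1⟩ := key y hy
  set ux := (x + K) / (2 * K) with hux
  set uy := (y + K) / (2 * K) with huy
  have hxle : ux * G ≤ G := by nlinarith
  have hyle : uy * G ≤ G := by nlinarith
  have hfx : ⌊ux * G⌋₊ ≤ G := by
    have := Nat.floor_mono hxle
    rwa [Nat.floor_natCast] at this
  have hfy : ⌊uy * G⌋₊ ≤ G := by
    have := Nat.floor_mono hyle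
    rwa [Nat.floor_natCast] at this
  have heq : ⌊ux * G⌋₊ = ⌊uy * G⌋₊ := by
    have := congrArg (fun t : Fin (G+1) => (t : ℕ)) h
    simpa [cellIdx, ← hux, ← huy, Nat.min_eq_left hfx, Nat.min_eq_left hfy] using this
  have hb1 : (⌊ux * G⌋₊ : ℝ) ≤ ux * G := Nat.floor_le (by positivity)
  have hb2 : ux * G < ⌊ux * G⌋₊ + 1 := Nat.lt_floor_add_one _
  have hb3 : (⌊uy * G⌋₊ : ℝ) ≤ uy * G := Nat.floor_le (by positivity)
  have hb4 : uy * G < ⌊uy * G⌋₊ + 1 := Nat.lt_floor_add_one _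
  have hdiff : |ux * G - uy * G| ≤ 1 := by
    rw [heq] at hb1 hb2
    rw [abs_le]
    constructor <;> linarith
  have habs : |ux - uy| * G ≤ 1 := by
    calc |ux - uy| * (G:ℝ) = |(ux - uy) * G| := by
          rw [abs_mul, abs_of_nonneg hGpos.le]
      _ = |ux * G - uy * G| := by rw [sub_mul]
      _ ≤ 1 := hdiff
  have h1G : |ux - uy| ≤ 1 / G := by
    rw [le_div_iff₀ hGpos]
    exact habs
  have hxy : x - y = (ux - uy) * (2 * K) := by
    rw [hux, huy]; field_simp; ring
  rw [hxy, abs_mul, abs_of_pos (show (0:ℝ) < 2 * K by linarith)]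
  calc |ux - uy| * (2 * K) ≤ (1 / G) * (2 * K) := by nlinarith
    _ = 2 * K / G := by ring

lemma cell_close {K : ℝ} {G : ℕ} (hK : 0 < K) (hG : 0 < G) {z w : ℂ}
    (hz : ‖z‖ ≤ K) (hw : ‖w‖ ≤ K) (h : cell K G z = cell K G w) :
    ‖z - w‖ ≤ 4 * K / G := by
  have h1 : cellIdx K G z.re = cellIdx K G w.re := congrArg Prod.fst h
  have h2 : cellIdx K G z.im = cellIdx K G w.im := congrArg Prod.snd h
  have hzre : |z.re| ≤ K := (Complex.abs_re_le_norm z).trans hz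
  have hwre : |w.re| ≤ K := (Complex.abs_re_le_norm w).trans hw
  have hzim : |z.im| ≤ K := (Complex.abs_im_le_norm z).trans hz
  have hwim : |w.im| ≤ K := (Complex.abs_im_le_norm w).trans hw
  have e1 := cellIdx_close hK hG hzre hwre h1
  have e2 := cellIdx_close hK hG hzim hwim h2
  have : ‖z - w‖ ≤ |(z - w).re| + |(z - w).im| := Complex.norm_le_abs_re_add_abs_im _
  rw [Complex.sub_re, Complex.sub_im] at this
  have hGpos : (0:ℝ) < G := by exact_mod_cast hG
  calc ‖z - w‖ ≤ |z.re - w.re| + |z.im - w.im| := this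
    _ ≤ 2 * K / G + 2 * K / G := add_le_add e1 e2
    _ = 4 * K / G := by ring

noncomputable def colorOf {N : ℕ} (g : Fin N → Fin N → Fin N → Fin N → ℂ) (K : ℝ) (G r : ℕ)
    (s : Finset (Fin N)) : (Fin 4 → Fin r) → Fin (G + 1) × Fin (G + 1) :=
  if h : s.card = r then
    fun v => cell K G (g (s.orderEmbOfFin h (v 0)) (s.orderEmbOfFin h (v 1))
      (s.orderEmbOfFin h (v 2)) (s.orderEmbOfFin h (v 3)))
  else fun _ => default

lemma constPattern {N : ℕ} (g : Fin N → Fin N → Fin N → Fin N → ℂ) (K : ℝ) (G r : ℕ)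
    {M : Finset (Fin N)}
    (hmono : ∀ s ⊆ M, s.card = r → ∀ t ⊆ M, t.card = r →
      colorOf g K G r s = colorOf g K G r t)
    {x y : Fin r → Fin N} (hx : ∀ v, x v ∈ M) (hy : ∀ v, y v ∈ M)
    (hxi : Function.Injective x) (horder : ∀ u v, x u < x v ↔ y u < y v)
    (τ : Fin 4 → Fin r) :
    cell K G (g (x (τ 0)) (x (τ 1)) (x (τ 2)) (x (τ 3)))
      = cell K G (g (y (τ 0)) (y (τ 1)) (y (τ 2)) (y (τ 3))) := by
  set π := Tuple.sort x with hπ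
  have hxm : StrictMono (x ∘ π) :=
    (Tuple.monotone_sort x).strictMono_of_injective (hxi.comp π.injective)
  have hym : StrictMono (y ∘ π) := fun u v huv => (horder _ _).mp (hxm huv)
  set sx := Finset.image (x ∘ π) Finset.univ with hsxdef
  set sy := Finset.image (y ∘ π) Finset.univ with hsydef
  have hsx : sx.card = r := by
    rw [hsxdef, Finset.card_image_of_injective _ hxm.injective, Finset.card_univ,
      Fintype.card_fin]
  have hsy : sy.card = r := by
    rw [hsydef, Finset.card_image_of_injective _ hym.injective, Finset.card_univ,
      Fintype.card_fin]
  have hux : (x ∘ π) = ⇑(sx.orderEmbOfFin hsx) :=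
    Finset.orderEmbOfFin_unique hsx (fun v => Finset.mem_image_of_mem _ (Finset.mem_univ v)) hxm
  have huy : (y ∘ π) = ⇑(sy.orderEmbOfFin hsy) :=
    Finset.orderEmbOfFin_unique hsy (fun v => Finset.mem_image_of_mem _ (Finset.mem_univ v)) hym
  have hsxM : sx ⊆ M := by
    intro z hz
    obtain ⟨v, _, rfl⟩ := Finset.mem_image.mp hz
    exact hx _
  have hsyM : sy ⊆ M := by
    intro z hz
    obtain ⟨v, _, rfl⟩ := Finset.mem_image.mp hz
    exact hy _
  have key := hmono sx hsxM hsx sy hsyM hsy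
  have keyv := congrFun key (fun u => π.symm (τ u))
  unfold colorOf at keyv
  rw [dif_pos hsx, dif_pos hsy] at keyv
  have ex : ∀ u : Fin 4, (sx.orderEmbOfFin hsx) (π.symm (τ u)) = x (τ u) := by
    intro u
    rw [← congrFun hux (π.symm (τ u))]
    simp
  have ey : ∀ u : Fin 4, (sy.orderEmbOfFin hsy) (π.symm (τ u)) = y (τ u) := by
    intro u
    rw [← congrFun huy (π.symm (τ u))]
    simp
  rw [ex 0, ex 1, ex 2, ex 3, ey 0, ey 1, ey 2, ey 3] at keyv
  exact keyv

lemma blockLt {m e e' o o' : ℕ} (ho : o < m) (h : e < e') : e * m + o < e' * m + o' := by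
  have h1 : e * m + o < (e + 1) * m := by
    rw [add_mul, one_mul]; omega
  have h2 : (e + 1) * m ≤ e' * m := Nat.mul_le_mul_right m h
  omega

lemma blockLtIff {m e e' o o' : ℕ} (ho : o < m) (ho' : o' < m) (hne : e ≠ e') :
    (e * m + o < e' * m + o' ↔ e < e') := by
  constructor
  · intro h
    by_contra hc
    push_neg at hc
    have : e' < e := lt_of_le_of_ne hc (Ne.symm hne)
    exact absurd h (not_lt.mpr (le_of_lt (blockLt ho' this)))
  · exact blockLt ho

end TCaux


open scoped Matrix.Norms.L2Operator

namespace TCaux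

lemma blockNe {m e e' o o' : ℕ} (ho : o < m) (ho' : o' < m) (hne : e ≠ e') :
    e * m + o ≠ e' * m + o' := by
  rcases Nat.lt_or_ge e e' with h | h
  · exact Nat.ne_of_lt (blockLt ho h)
  · have h' : e' < e := lt_of_le_of_ne h (Ne.symm hne)
    exact (Nat.ne_of_lt (blockLt ho' h')).symm

/-- Pattern-transfer for tuples given in block-position form. -/
lemma constBlocks {N R mvv : ℕ} (g : Fin N → Fin N → Fin N → Fin N → ℂ) (K : ℝ) (G r : ℕ)
    {M : Finset (Fin N)}
    (hmono : ∀ s ⊆ M, s.card = r → ∀ t ⊆ M, t.card = r →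
      colorOf g K G r s = colorOf g K G r t)
    (w : Fin R ↪o Fin N) (hwM : ∀ v, w v ∈ M)
    (e e' o o' : Fin r → ℕ) (ho : ∀ v, o v < mvv) (ho' : ∀ v, o' v < mvv)
    (he : Function.Injective e) (he' : Function.Injective e')
    (hee' : ∀ u v, e u < e v ↔ e' u < e' v)
    (hb : ∀ v, e v * mvv + o v < R) (hb' : ∀ v, e' v * mvv + o' v < R)
    (τ : Fin 4 → Fin r) :
    cell K G (g (w ⟨e (τ 0) * mvv + o (τ 0), hb _⟩) (w ⟨e (τ 1) * mvv + o (τ 1), hb _⟩)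
        (w ⟨e (τ 2) * mvv + o (τ 2), hb _⟩) (w ⟨e (τ 3) * mvv + o (τ 3), hb _⟩))
      = cell K G (g (w ⟨e' (τ 0) * mvv + o' (τ 0), hb' _⟩) (w ⟨e' (τ 1) * mvv + o' (τ 1), hb' _⟩)
        (w ⟨e' (τ 2) * mvv + o' (τ 2), hb' _⟩) (w ⟨e' (τ 3) * mvv + o' (τ 3), hb' _⟩)) := by
  refine constPattern g K G r hmono
    (x := fun v => w ⟨e v * mvv + o v, hb v⟩) (y := fun v => w ⟨e' v * mvv + o' v, hb' v⟩)
    (fun v => hwM _) (fun v => hwM _) ?_ ?_ τ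
  · intro u v huv
    by_contra hne
    have h1 : (⟨e u * mvv + o u, hb u⟩ : Fin R) = ⟨e v * mvv + o v, hb v⟩ := w.injective huv
    have h2 : e u * mvv + o u = e v * mvv + o v := by
      exact congrArg Fin.val h1
    exact blockNe (ho u) (ho v) (fun hc => hne (he hc)) h2
  · intro u v
    rcases eq_or_ne u v with rfl | hne
    · simp
    · have hneuv : e u ≠ e v := fun hc => hne (he hc)
      have hneuv' : e' u ≠ e' v := fun hc => hne (he' hc)
      rw [w.lt_iff_lt, w.lt_iff_lt, Fin.mk_lt_mk, Fin.mk_lt_mk,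
        blockLtIff (ho u) (ho v) hneuv, blockLtIff (ho' u) (ho' v) hneuv', hee']

lemma row_l2_family {N mvv : ℕ} (B : Matrix (Fin N) (Fin N) ℂ) (r : Fin N)
    (cf : Fin mvv → Fin N) (hcf : Function.Injective cf) :
    ∑ t, ‖B r (cf t)‖ ^ 2 ≤ ‖B‖ ^ 2 := by
  have h : ∑ s' ∈ Finset.univ.image cf, ‖B r s'‖ ^ 2 = ∑ t, ‖B r (cf t)‖ ^ 2 :=
    Finset.sum_image (fun x _ y _ hxy => hcf hxy)
  rw [← h]
  exact row_l2 B _ r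

lemma col_l2_family {N mvv : ℕ} (B : Matrix (Fin N) (Fin N) ℂ) (s : Fin N)
    (cf : Fin mvv → Fin N) (hcf : Function.Injective cf) :
    ∑ t, ‖B (cf t) s‖ ^ 2 ≤ ‖B‖ ^ 2 := by
  have h : ∑ r' ∈ Finset.univ.image cf, ‖B r' s‖ ^ 2 = ∑ t, ‖B (cf t) s‖ ^ 2 :=
    Finset.sum_image (fun x _ y _ hxy => hcf hxy)
  rw [← h]
  exact col_l2 B _ s

lemma small_of_family {K : ℝ} {G mvv : ℕ} (hK : 0 < K) (hG : 0 < G) (hm : 0 < mvv)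
    (val : Fin mvv → ℂ) (hvalK : ∀ t, ‖val t‖ ≤ K)
    (hcell : ∀ t t' : Fin mvv, cell K G (val t) = cell K G (val t'))
    (hsum : ∑ t, ‖val t‖ ^ 2 ≤ K ^ 2) :
    ‖val ⟨0, hm⟩‖ ≤ 4 * K / G + K / Real.sqrt mvv := by
  have hmvR : (0:ℝ) < mvv := by exact_mod_cast hm
  obtain ⟨t₀, ht₀⟩ : ∃ t₀ : Fin mvv, ‖val t₀‖ ^ 2 ≤ K ^ 2 / mvv := by
    by_contra hcon
    push_neg at hcon
    have hne : (Finset.univ : Finset (Fin mvv)).Nonempty := ⟨⟨0, hm⟩, Finset.mem_univ _⟩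
    have h1 : ∑ _t : Fin mvv, K ^ 2 / mvv < ∑ t, ‖val t‖ ^ 2 :=
      Finset.sum_lt_sum_of_nonempty hne (fun t _ => hcon t)
    rw [Finset.sum_const, Finset.card_univ, Fintype.card_fin, nsmul_eq_mul] at h1
    have h2 : (mvv : ℝ) * (K ^ 2 / mvv) = K ^ 2 := by field_simp
    rw [h2] at h1
    linarith
  have hsqrtpos : 0 < Real.sqrt mvv := Real.sqrt_pos.mpr hmvR
  have h2 : ‖val t₀‖ ≤ K / Real.sqrt mvv := by
    have hs : Real.sqrt (K ^ 2 / mvv) = K / Real.sqrt mvv := by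
      rw [Real.sqrt_div (sq_nonneg K), Real.sqrt_sq hK.le]
    calc ‖val t₀‖ = Real.sqrt (‖val t₀‖ ^ 2) := (Real.sqrt_sq (norm_nonneg _)).symm
      _ ≤ Real.sqrt (K ^ 2 / mvv) := Real.sqrt_le_sqrt ht₀
      _ = K / Real.sqrt mvv := hs
  have h3 : ‖val ⟨0, hm⟩ - val t₀‖ ≤ 4 * K / G :=
    cell_close hK hG (hvalK _) (hvalK _) (hcell _ _)
  calc ‖val ⟨0, hm⟩‖ = ‖(val ⟨0, hm⟩ - val t₀) + val t₀‖ := by ring_nf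
    _ ≤ ‖val ⟨0, hm⟩ - val t₀‖ + ‖val t₀‖ := norm_add_le _ _
    _ ≤ 4 * K / G + K / Real.sqrt mvv := add_le_add h3 h2

end TCaux




open scoped Matrix.Norms.L2Operator

/-- The space `T_N` of upper triangular `N × N` complex matrices, as a subspace of the
`N × N` matrices (the latter carrying the operator norm on Euclidean space `ℂ^N`). -/
noncomputable def upperTriangular (N : ℕ) : Submodule ℂ (Matrix (Fin N) (Fin N) ℂ) where
  carrier := {A | ∀ i j : Fin N, j < i → A i j = 0}
  add_mem' := by
    intro A B hA hB i j hij
    simp [Matrix.add_apply, hA i j hij, hB i j hij]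
  zero_mem' := by intro i j hij; simp
  smul_mem' := by
    intro c A hA i j hij
    simp [Matrix.smul_apply, hA i j hij]

/-- The map `J` determined by `σ`, `ψ`: `(J A)(σ i, ψ j) = A i j` for `i ≤ j`,
all other entries `0`. -/
noncomputable def Jmap {n N : ℕ} (σ ψ : Fin n → Fin N)
    (A : Matrix (Fin n) (Fin n) ℂ) : Matrix (Fin N) (Fin N) ℂ :=
  Matrix.of fun p q =>
    ∑ i : Fin n, ∑ j : Fin n, if i ≤ j ∧ p = σ i ∧ q = ψ j then A i j else 0

/-- The compression map `C` determined by `σ`, `ψ`: `(C B) i j = B (σ i) (ψ j)`. -/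
noncomputable def Cmap {n N : ℕ} (σ ψ : Fin n → Fin N)
    (B : Matrix (Fin N) (Fin N) ℂ) : Matrix (Fin n) (Fin n) ℂ :=
  Matrix.of fun i j => B (σ i) (ψ j)

set_option maxHeartbeats 4000000

/-- given `n ≥ 1`, `ε > 0`, `K > 0`, there is `N₀` such that every operator
`T : T_N → T_N` with `‖T‖ ≤ K` (`N > N₀`) admits interlacing indices
`σ 1 < ψ 1 < σ 2 < ψ 2 < ⋯ < σ n < ψ n` and a scalar `λ` with
`‖C (T (J A)) - λ • A‖ ≤ ε ‖A‖` for all `A ∈ T_n`. -/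
theorem triangular_compression (n : ℕ) (hn : 1 ≤ n) (ε K : ℝ) (hε : 0 < ε) (hK : 0 < K) :
    ∃ N₀ : ℕ, ∀ N : ℕ, N₀ < N →
      ∀ T : upperTriangular N →L[ℂ] upperTriangular N, ‖T‖ ≤ K →
        ∃ (σ ψ : Fin n → Fin N) (lam : ℂ),
          (∀ i : Fin n, σ i < ψ i) ∧
          (∀ i j : Fin n, i < j → ψ i < σ j) ∧
          ∀ (A : Matrix (Fin n) (Fin n) ℂ), A ∈ upperTriangular n →
            ∀ hJ : Jmap σ ψ A ∈ upperTriangular N,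
              ‖Cmap σ ψ ((T ⟨Jmap σ ψ A, hJ⟩ : upperTriangular N) :
                  Matrix (Fin N) (Fin N) ℂ) - lam • A‖ ≤ ε * ‖A‖ := by
  classical
  have hnR : (1:ℝ) ≤ (n:ℝ) := by exact_mod_cast hn
  have hn4 : (0:ℝ) < (n:ℝ) ^ 4 := by positivity
  set G : ℕ := ⌈8 * K * (n:ℝ) ^ 4 / ε⌉₊ + 1 with hGdef
  have hG : 0 < G := Nat.succ_pos _
  have hGR : (0:ℝ) < G := by exact_mod_cast hG
  set c₀ : ℕ := ⌈2 * K * (n:ℝ) ^ 4 / ε⌉₊ + 1 with hc₀def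
  have hc₀ : 0 < c₀ := Nat.succ_pos _
  set mv : ℕ := c₀ ^ 2 with hmvdef
  have hm : 0 < mv := by positivity
  set δ : ℝ := 4 * K / G + K / Real.sqrt mv with hδdef
  have hδ0 : 0 ≤ δ := by
    have h1 : 0 ≤ 4 * K / G := div_nonneg (by linarith) hGR.le
    have h2 : 0 ≤ K / Real.sqrt mv := div_nonneg hK.le (Real.sqrt_nonneg _)
    rw [hδdef]
    linarith
  obtain ⟨N2, hN2⟩ := myRamsey (κ := (Fin 4 → Fin 2) → Fin (G+1) × Fin (G+1)) 2 (2*n*mv)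
  obtain ⟨N3, hN3⟩ := myRamsey (κ := (Fin 4 → Fin 3) → Fin (G+1) × Fin (G+1)) 3 N2
  obtain ⟨N4, hN4⟩ := myRamsey (κ := (Fin 4 → Fin 4) → Fin (G+1) × Fin (G+1)) 4 N3
  refine ⟨N4, ?_⟩
  intro N hNN T hT
  have hEsubMem : ∀ a b : Fin N, a < b → Matrix.single a b (1:ℂ) ∈ upperTriangular N := by
    intro a b hab i j hij
    show (if a = i ∧ b = j then (1:ℂ) else 0) = 0
    rw [if_neg]
    rintro ⟨rfl, rfl⟩
    exact absurd hab (not_lt.mpr hij.le)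
  set Esub : Fin N → Fin N → upperTriangular N := fun a b =>
    if h : a < b then ⟨Matrix.single a b 1, hEsubMem a b h⟩ else 0 with hEsubdef
  set g : Fin N → Fin N → Fin N → Fin N → ℂ := fun a b r s =>
    ((T (Esub a b) : upperTriangular N) : Matrix (Fin N) (Fin N) ℂ) r s with hgdef
  have hEsubnorm : ∀ a b, ‖Esub a b‖ ≤ 1 := by
    intro a b
    rw [Submodule.coe_norm, hEsubdef]
    dsimp only
    split_ifs with h
    · simpa using TCaux.std_le a b (1:ℂ)
    · simp
  have hTB : ∀ a b, ‖((T (Esub a b) : upperTriangular N) : Matrix (Fin N) (Fin N) ℂ)‖ ≤ K := by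
    intro a b
    have h1 : ‖T (Esub a b)‖ ≤ ‖T‖ * ‖Esub a b‖ := T.le_opNorm _
    rw [← Submodule.coe_norm]
    calc ‖T (Esub a b)‖ ≤ ‖T‖ * ‖Esub a b‖ := h1
      _ ≤ K * 1 := mul_le_mul hT (hEsubnorm a b) (norm_nonneg _) hK.le
      _ = K := mul_one K
  have hgK : ∀ a b r s, ‖g a b r s‖ ≤ K := fun a b r s =>
    (TCaux.entry_le _ r s).trans (hTB a b)
  have hcard : N4 ≤ (Finset.univ : Finset (Fin N)).card := by
    rw [Finset.card_univ, Fintype.card_fin]; omega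
  obtain ⟨M4, _, hM4card, c4, hc4⟩ := hN4 (Fin N) Finset.univ (TCaux.colorOf g K G 4) hcard
  obtain ⟨M3, hM34, hM3card, c3, hc3⟩ :=
    hN3 (Fin N) M4 (TCaux.colorOf g K G 3) (le_of_eq hM4card.symm)
  obtain ⟨M2, hM23, hM2card, c2, hc2⟩ :=
    hN2 (Fin N) M3 (TCaux.colorOf g K G 2) (le_of_eq hM3card.symm)
  have hmono4 : ∀ s ⊆ M2, s.card = 4 → ∀ t ⊆ M2, t.card = 4 →
      TCaux.colorOf g K G 4 s = TCaux.colorOf g K G 4 t := fun s hs hsc t ht htc =>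
    (hc4 s (fun z hz => hM34 (hM23 (hs hz))) hsc).trans
      (hc4 t (fun z hz => hM34 (hM23 (ht hz))) htc).symm
  have hmono3 : ∀ s ⊆ M2, s.card = 3 → ∀ t ⊆ M2, t.card = 3 →
      TCaux.colorOf g K G 3 s = TCaux.colorOf g K G 3 t := fun s hs hsc t ht htc =>
    (hc3 s (fun z hz => hM23 (hs hz)) hsc).trans (hc3 t (fun z hz => hM23 (ht hz)) htc).symm
  have hmono2 : ∀ s ⊆ M2, s.card = 2 → ∀ t ⊆ M2, t.card = 2 →
      TCaux.colorOf g K G 2 s = TCaux.colorOf g K G 2 t := fun s hs hsc t ht htc =>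
    (hc2 s hs hsc).trans (hc2 t ht htc).symm
  set w := M2.orderEmbOfFin hM2card with hwdef
  have hwM : ∀ v, w v ∈ M2 := fun v => Finset.orderEmbOfFin_mem M2 hM2card v
  have hpos : ∀ e o : ℕ, e < 2*n → o < mv → e*mv + o < 2*n*mv := by
    intro e o he ho
    have h1 : e*mv + o < (e+1)*mv := by rw [add_mul, one_mul]; omega
    have h2 : (e+1)*mv ≤ 2*n*mv := Nat.mul_le_mul_right mv (by omega)
    omega
  set σf : Fin n → Fin N := fun i => w ⟨2*i.val*mv + 0, hpos _ _ (by omega) hm⟩ with hσdef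
  set ψf : Fin n → Fin N := fun j => w ⟨(2*j.val+1)*mv + 0, hpos _ _ (by omega) hm⟩ with hψdef
  have hlt1 : ∀ i : Fin n, σf i < ψf i := by
    intro i
    rw [hσdef, hψdef]
    dsimp only
    rw [w.lt_iff_lt, Fin.mk_lt_mk]
    exact TCaux.blockLt hm (by omega)
  have hlt2 : ∀ i j : Fin n, i < j → ψf i < σf j := by
    intro i j hij
    rw [hσdef, hψdef]
    dsimp only
    rw [w.lt_iff_lt, Fin.mk_lt_mk]
    exact TCaux.blockLt hm (by omega)
  have hσψ : ∀ i j : Fin n, i ≤ j → σf i < ψf j := by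
    intro i j hij
    rw [hσdef, hψdef]
    dsimp only
    rw [w.lt_iff_lt, Fin.mk_lt_mk]
    exact TCaux.blockLt hm (by omega)
  -- decomposition of J A in the submodule
  have hJdecomp : ∀ (A : Matrix (Fin n) (Fin n) ℂ), A ∈ upperTriangular n →
      ∀ (hJ : Jmap σf ψf A ∈ upperTriangular N),
      (⟨Jmap σf ψf A, hJ⟩ : upperTriangular N)
        = ∑ i : Fin n, ∑ j : Fin n, A i j • Esub (σf i) (ψf j) := by
    intro A hA hJ
    apply Subtype.ext
    have hcoe : ((∑ i : Fin n, ∑ j : Fin n, A i j • Esub (σf i) (ψf j) : upperTriangular N) :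
        Matrix (Fin N) (Fin N) ℂ)
        = ∑ i : Fin n, ∑ j : Fin n,
            A i j • ((Esub (σf i) (ψf j) : upperTriangular N) : Matrix (Fin N) (Fin N) ℂ) := by
      rw [AddSubmonoidClass.coe_finset_sum]
      exact Finset.sum_congr rfl fun i _ => by
        rw [AddSubmonoidClass.coe_finset_sum]
        exact Finset.sum_congr rfl fun j _ => rfl
    show Jmap σf ψf A = _
    rw [hcoe]
    ext p q
    rw [Jmap]
    simp only [Matrix.of_apply, Matrix.sum_apply, Matrix.smul_apply, smul_eq_mul]
    refine Finset.sum_congr rfl fun i _ => Finset.sum_congr rfl fun j _ => ?_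
    by_cases hij : i ≤ j
    · have hσψij : σf i < ψf j := hσψ i j hij
      rw [hEsubdef]
      dsimp only
      rw [dif_pos hσψij]
      show _ = A i j * (if σf i = p ∧ ψf j = q then (1:ℂ) else 0)
      by_cases hpq : p = σf i ∧ q = ψf j
      · rw [if_pos ⟨hij, hpq⟩, if_pos ⟨hpq.1.symm, hpq.2.symm⟩, mul_one]
      · rw [if_neg (fun hc => hpq ⟨hc.2.1, hc.2.2⟩),
          if_neg (fun hc => hpq ⟨hc.1.symm, hc.2.symm⟩), mul_zero]
    · rw [if_neg (fun hc => hij hc.1)]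
      have hA0 : A i j = 0 := hA i j (not_le.mp hij)
      rw [hA0, zero_mul]
  have hTJentry : ∀ (A : Matrix (Fin n) (Fin n) ℂ), A ∈ upperTriangular n →
      ∀ (hJ : Jmap σf ψf A ∈ upperTriangular N), ∀ p q : Fin N,
      ((T ⟨Jmap σf ψf A, hJ⟩ : upperTriangular N) : Matrix (Fin N) (Fin N) ℂ) p q
        = ∑ i : Fin n, ∑ j : Fin n, A i j * g (σf i) (ψf j) p q := by
    intro A hA hJ p q
    rw [hJdecomp A hA hJ]
    rw [map_sum]
    rw [AddSubmonoidClass.coe_finset_sum, Matrix.sum_apply]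
    refine Finset.sum_congr rfl fun i _ => ?_
    rw [map_sum, AddSubmonoidClass.coe_finset_sum, Matrix.sum_apply]
    refine Finset.sum_congr rfl fun j _ => ?_
    rw [map_smul]
    rw [show ((A i j • T (Esub (σf i) (ψf j)) : upperTriangular N) : Matrix (Fin N) (Fin N) ℂ)
        = A i j • ((T (Esub (σf i) (ψf j)) : upperTriangular N) : Matrix (Fin N) (Fin N) ℂ)
      from rfl]
    rw [Matrix.smul_apply, smul_eq_mul]
  set i0 : Fin n := ⟨0, by omega⟩ with hi0def
  set lam : ℂ := g (σf i0) (ψf i0) (σf i0) (ψf i0) with hlamdef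
  -- diagonal estimate
  have hdiag : ∀ i j : Fin n, i ≤ j →
      ‖g (σf i) (ψf j) (σf i) (ψf j) - lam‖ ≤ 4 * K / G := by
    intro i j hij
    have hi' := i.isLt
    have hj' := j.isLt
    have hij' : i.val ≤ j.val := hij
    have hcp := TCaux.constBlocks g K G 2 hmono2 w hwM
      (e := ![2*i.val, 2*j.val+1]) (e' := ![2*i0.val, 2*i0.val+1])
      (o := ![0, 0]) (o' := ![0, 0])
      (fun v => by fin_cases v <;> exact hm) (fun v => by fin_cases v <;> exact hm)
      (by intro u v huv; fin_cases u <;> fin_cases v <;>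
        first
        | rfl
        | (exfalso; simp at huv; all_goals omega))
      (by intro u v huv; fin_cases u <;> fin_cases v <;>
        first
        | rfl
        | (exfalso; simp at huv; all_goals omega))
      (by intro u v; fin_cases u <;> fin_cases v <;> simp <;> omega)
      (fun v => by fin_cases v <;> refine hpos _ _ ?_ ?_ <;> simp <;> omega)
      (fun v => by fin_cases v <;> refine hpos _ _ ?_ ?_ <;> simp <;> omega)
      ![0, 1, 0, 1]
    exact TCaux.cell_close hK hG (hgK _ _ _ _) (hgK _ _ _ _) hcp
  -- off-diagonal estimates
  have hoff : ∀ i j k l : Fin n, i ≤ j → k ≤ l → ¬(i = k ∧ j = l) →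
      ‖g (σf i) (ψf j) (σf k) (ψf l)‖ ≤ δ := by
    intro i j k l hij hkl hne
    have hi' := i.isLt
    have hj' := j.isLt
    have hk' := k.isLt
    have hl' := l.isLt
    have hij' : i.val ≤ j.val := hij
    have hkl' : k.val ≤ l.val := hkl
    by_cases hjl : j = l
    · -- vary the third coordinate (row of the entry), column bound
      subst hjl
      have hik : i ≠ k := fun hc => hne ⟨hc, rfl⟩
      have hik' : i.val ≠ k.val := fun hc => hik (Fin.ext hc)
      set B := ((T (Esub (σf i) (ψf j)) : upperTriangular N) : Matrix (Fin N) (Fin N) ℂ)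
        with hBdef
      set val : Fin mv → ℂ := fun t =>
        g (σf i) (ψf j) (w ⟨2*k.val*mv + t.val, hpos _ _ (by omega) t.isLt⟩) (ψf j) with hvaldef
      have hcell : ∀ t t' : Fin mv, TCaux.cell K G (val t) = TCaux.cell K G (val t') := by
        intro t t'
        exact TCaux.constBlocks g K G 3 hmono3 w hwM
          (e := ![2*i.val, 2*j.val+1, 2*k.val]) (e' := ![2*i.val, 2*j.val+1, 2*k.val])
          (o := ![0, 0, t.val]) (o' := ![0, 0, t'.val])
          (fun v => by fin_cases v <;> first | exact hm | exact t.isLt | exact t'.isLt)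
          (fun v => by fin_cases v <;> first | exact hm | exact t.isLt | exact t'.isLt)
          (by intro u v huv; fin_cases u <;> fin_cases v <;>
            first
            | rfl
            | (exfalso; simp at huv; all_goals omega))
          (by intro u v huv; fin_cases u <;> fin_cases v <;>
            first
            | rfl
            | (exfalso; simp at huv; all_goals omega))
          (fun u v => Iff.rfl)
          (fun v => by fin_cases v <;> refine hpos _ _ ?_ ?_ <;> simp <;> omega)
          (fun v => by fin_cases v <;> refine hpos _ _ ?_ ?_ <;> simp <;> omega)
          ![0, 1, 2, 1]
      have hsum : ∑ t, ‖val t‖ ^ 2 ≤ K ^ 2 := by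
        have hinj : Function.Injective
            (fun t : Fin mv => (w ⟨2*k.val*mv + t.val, hpos _ _ (by omega) t.isLt⟩ : Fin N)) := by
          intro t t' h
          have h2 := congrArg Fin.val (w.injective h)
          simp only [Fin.val] at h2
          exact Fin.ext (by omega)
        have h1 := TCaux.col_l2_family B (ψf j)
          (fun t : Fin mv => w ⟨2*k.val*mv + t.val, hpos _ _ (by omega) t.isLt⟩) hinj
        have h2 : ‖B‖ ^ 2 ≤ K ^ 2 := by
          have := hTB (σf i) (ψf j)
          nlinarith [norm_nonneg B]
        exact le_trans h1 h2
      have := TCaux.small_of_family hK hG hm val (fun t => hgK _ _ _ _) hcell hsum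
      exact this
    · have hjl' : j.val ≠ l.val := fun hc => hjl (Fin.ext hc)
      by_cases hik : i = k
      · -- vary the fourth coordinate, row bound
        subst hik
        set B := ((T (Esub (σf i) (ψf j)) : upperTriangular N) : Matrix (Fin N) (Fin N) ℂ)
          with hBdef
        set val : Fin mv → ℂ := fun t =>
          g (σf i) (ψf j) (σf i) (w ⟨(2*l.val+1)*mv + t.val, hpos _ _ (by omega) t.isLt⟩)
          with hvaldef
        have hcell : ∀ t t' : Fin mv, TCaux.cell K G (val t) = TCaux.cell K G (val t') := by
          intro t t'
          exact TCaux.constBlocks g K G 3 hmono3 w hwM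
            (e := ![2*i.val, 2*j.val+1, 2*l.val+1]) (e' := ![2*i.val, 2*j.val+1, 2*l.val+1])
            (o := ![0, 0, t.val]) (o' := ![0, 0, t'.val])
            (fun v => by fin_cases v <;> first | exact hm | exact t.isLt | exact t'.isLt)
            (fun v => by fin_cases v <;> first | exact hm | exact t.isLt | exact t'.isLt)
            (by intro u v huv; fin_cases u <;> fin_cases v <;>
              first
              | rfl
              | (exfalso; simp at huv; all_goals omega))
            (by intro u v huv; fin_cases u <;> fin_cases v <;>
              first
              | rfl
              | (exfalso; simp at huv; all_goals omega))
            (fun u v => Iff.rfl)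
            (fun v => by fin_cases v <;> refine hpos _ _ ?_ ?_ <;> simp <;> omega)
            (fun v => by fin_cases v <;> refine hpos _ _ ?_ ?_ <;> simp <;> omega)
            ![0, 1, 0, 2]
        have hsum : ∑ t, ‖val t‖ ^ 2 ≤ K ^ 2 := by
          have hinj : Function.Injective
              (fun t : Fin mv =>
                (w ⟨(2*l.val+1)*mv + t.val, hpos _ _ (by omega) t.isLt⟩ : Fin N)) := by
            intro t t' h
            have h2 := congrArg Fin.val (w.injective h)
            simp only [Fin.val] at h2
            exact Fin.ext (by omega)
          have h1 := TCaux.row_l2_family B (σf i)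
            (fun t : Fin mv => w ⟨(2*l.val+1)*mv + t.val, hpos _ _ (by omega) t.isLt⟩) hinj
          have h2 : ‖B‖ ^ 2 ≤ K ^ 2 := by
            have := hTB (σf i) (ψf j)
            nlinarith [norm_nonneg B]
          exact le_trans h1 h2
        have := TCaux.small_of_family hK hG hm val (fun t => hgK _ _ _ _) hcell hsum
        exact this
      · -- all four distinct, vary the fourth coordinate, row bound
        have hik' : i.val ≠ k.val := fun hc => hik (Fin.ext hc)
        set B := ((T (Esub (σf i) (ψf j)) : upperTriangular N) : Matrix (Fin N) (Fin N) ℂ)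
          with hBdef
        set val : Fin mv → ℂ := fun t =>
          g (σf i) (ψf j) (σf k) (w ⟨(2*l.val+1)*mv + t.val, hpos _ _ (by omega) t.isLt⟩)
          with hvaldef
        have hcell : ∀ t t' : Fin mv, TCaux.cell K G (val t) = TCaux.cell K G (val t') := by
          intro t t'
          exact TCaux.constBlocks g K G 4 hmono4 w hwM
            (e := ![2*i.val, 2*j.val+1, 2*k.val, 2*l.val+1])
            (e' := ![2*i.val, 2*j.val+1, 2*k.val, 2*l.val+1])
            (o := ![0, 0, 0, t.val]) (o' := ![0, 0, 0, t'.val])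
            (fun v => by fin_cases v <;> first | exact hm | exact t.isLt | exact t'.isLt)
            (fun v => by fin_cases v <;> first | exact hm | exact t.isLt | exact t'.isLt)
            (by intro u v huv; fin_cases u <;> fin_cases v <;>
              first
              | rfl
              | (exfalso; simp at huv; all_goals omega))
            (by intro u v huv; fin_cases u <;> fin_cases v <;>
              first
              | rfl
              | (exfalso; simp at huv; all_goals omega))
            (fun u v => Iff.rfl)
            (fun v => by fin_cases v <;> refine hpos _ _ ?_ ?_ <;> simp <;> omega)
            (fun v => by fin_cases v <;> refine hpos _ _ ?_ ?_ <;> simp <;> omega)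
            (fun u => u)
        have hsum : ∑ t, ‖val t‖ ^ 2 ≤ K ^ 2 := by
          have hinj : Function.Injective
              (fun t : Fin mv =>
                (w ⟨(2*l.val+1)*mv + t.val, hpos _ _ (by omega) t.isLt⟩ : Fin N)) := by
            intro t t' h
            have h2 := congrArg Fin.val (w.injective h)
            simp only [Fin.val] at h2
            exact Fin.ext (by omega)
          have h1 := TCaux.row_l2_family B (σf k)
            (fun t : Fin mv => w ⟨(2*l.val+1)*mv + t.val, hpos _ _ (by omega) t.isLt⟩) hinj
          have h2 : ‖B‖ ^ 2 ≤ K ^ 2 := by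
            have := hTB (σf i) (ψf j)
            nlinarith [norm_nonneg B]
          exact le_trans h1 h2
        have := TCaux.small_of_family hK hG hm val (fun t => hgK _ _ _ _) hcell hsum
        exact this
  -- final parameter estimate
  have hδfinal : (n:ℝ) ^ 4 * δ ≤ ε := by
    have hc1 : 8 * K * (n:ℝ) ^ 4 / ε ≤ G := by
      rw [hGdef]
      push_cast
      have := Nat.le_ceil (8 * K * (n:ℝ) ^ 4 / ε)
      linarith
    have hc2 : 2 * K * (n:ℝ) ^ 4 / ε ≤ c₀ := by
      rw [hc₀def]
      push_cast
      have := Nat.le_ceil (2 * K * (n:ℝ) ^ 4 / ε)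
      linarith
    have hc₀R : (0:ℝ) < c₀ := by exact_mod_cast hc₀
    have hsq : Real.sqrt mv = c₀ := by
      rw [hmvdef, Nat.cast_pow]
      exact Real.sqrt_sq hc₀R.le
    have h1 : 4 * K / G ≤ ε / (2 * (n:ℝ)^4) := by
      rw [div_le_div_iff₀ hGR (by positivity)]
      have h2 : ε * G ≥ ε * (8 * K * (n:ℝ)^4 / ε) := by
        apply mul_le_mul_of_nonneg_left hc1 hε.le
      have h3 : ε * (8 * K * (n:ℝ)^4 / ε) = 8 * K * (n:ℝ)^4 := by field_simp
      nlinarith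
    have h4 : K / Real.sqrt mv ≤ ε / (2 * (n:ℝ)^4) := by
      rw [hsq, div_le_div_iff₀ hc₀R (by positivity)]
      have h5 : ε * c₀ ≥ ε * (2 * K * (n:ℝ)^4 / ε) := by
        apply mul_le_mul_of_nonneg_left hc2 hε.le
      have h6 : ε * (2 * K * (n:ℝ)^4 / ε) = 2 * K * (n:ℝ)^4 := by field_simp
      nlinarith
    have h7 : δ ≤ ε / (n:ℝ)^4 := by
      rw [hδdef]
      calc 4 * K / G + K / Real.sqrt mv ≤ ε / (2 * (n:ℝ)^4) + ε / (2 * (n:ℝ)^4) :=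
            add_le_add h1 h4
        _ = ε / (n:ℝ)^4 := by field_simp; ring
    calc (n:ℝ)^4 * δ ≤ (n:ℝ)^4 * (ε / (n:ℝ)^4) := mul_le_mul_of_nonneg_left h7 hn4.le
      _ = ε := by field_simp
  refine ⟨σf, ψf, lam, hlt1, hlt2, ?_⟩
  intro A hA hJ
  have hDentry : ∀ k l : Fin n,
      ‖(Cmap σf ψf ((T ⟨Jmap σf ψf A, hJ⟩ : upperTriangular N) : Matrix (Fin N) (Fin N) ℂ)
        - lam • A) k l‖ ≤ (n:ℝ)^2 * (‖A‖ * δ) := by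
    intro k l
    have hAnn : ∀ i j, ‖A i j‖ ≤ ‖A‖ := fun i j => TCaux.entry_le A i j
    by_cases hkl : k ≤ l
    · have hC : (Cmap σf ψf ((T ⟨Jmap σf ψf A, hJ⟩ : upperTriangular N) :
          Matrix (Fin N) (Fin N) ℂ)) k l
          = ∑ i : Fin n, ∑ j : Fin n, A i j * g (σf i) (ψf j) (σf k) (ψf l) :=
        hTJentry A hA hJ (σf k) (ψf l)
      have hcollapse : ∑ i : Fin n, ∑ j : Fin n,
          A i j * (if i = k ∧ j = l then lam else 0) = A k l * lam := by
        have hinner : ∀ i : Fin n, (∑ j : Fin n, A i j * (if i = k ∧ j = l then lam else 0))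
            = if i = k then A i l * lam else 0 := by
          intro i
          by_cases hik : i = k
          · subst hik
            rw [Finset.sum_eq_single l]
            · simp
            · intro b _ hb
              simp [hb]
            · intro h
              exact absurd (Finset.mem_univ l) h
          · simp only [hik, false_and, if_false, mul_zero, Finset.sum_const_zero, if_neg hik]
        rw [Finset.sum_congr rfl (fun i _ => hinner i)]
        rw [Finset.sum_eq_single k]
        · rw [if_pos rfl]
        · intro b _ hb
          rw [if_neg hb]
        · intro h
          exact absurd (Finset.mem_univ k) h
      have hsub : (Cmap σf ψf ((T ⟨Jmap σf ψf A, hJ⟩ : upperTriangular N) :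
          Matrix (Fin N) (Fin N) ℂ) - lam • A) k l
          = ∑ i : Fin n, ∑ j : Fin n,
              A i j * (g (σf i) (ψf j) (σf k) (ψf l) - (if i = k ∧ j = l then lam else 0)) := by
        rw [Matrix.sub_apply, Matrix.smul_apply, smul_eq_mul, hC]
        rw [show lam * A k l = A k l * lam from mul_comm _ _]
        rw [← hcollapse, ← Finset.sum_sub_distrib]
        refine Finset.sum_congr rfl fun i _ => ?_
        rw [← Finset.sum_sub_distrib]
        refine Finset.sum_congr rfl fun j _ => ?_
        rw [mul_sub]
      rw [hsub]
      have hterm : ∀ i j : Fin n,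
          ‖A i j * (g (σf i) (ψf j) (σf k) (ψf l) - (if i = k ∧ j = l then lam else 0))‖
            ≤ ‖A‖ * δ := by
        intro i j
        rw [norm_mul]
        by_cases hij : i ≤ j
        · by_cases hijkl : i = k ∧ j = l
          · obtain ⟨rfl, rfl⟩ := hijkl
            rw [if_pos ⟨rfl, rfl⟩]
            refine mul_le_mul (hAnn i j) ?_ (norm_nonneg _) (norm_nonneg A)
            refine le_trans (hdiag i j hij) ?_
            rw [hδdef]
            have : 0 ≤ K / Real.sqrt mv := by positivity
            linarith
          · rw [if_neg hijkl, sub_zero]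
            exact mul_le_mul (hAnn i j) (hoff i j k l hij hkl hijkl) (norm_nonneg _)
              (norm_nonneg A)
        · have hA0 : A i j = 0 := hA i j (not_le.mp hij)
          rw [hA0, norm_zero, zero_mul]
          exact mul_nonneg (norm_nonneg A) hδ0
      calc ‖∑ i : Fin n, ∑ j : Fin n,
            A i j * (g (σf i) (ψf j) (σf k) (ψf l) - (if i = k ∧ j = l then lam else 0))‖
          ≤ ∑ i : Fin n, ‖∑ j : Fin n,
            A i j * (g (σf i) (ψf j) (σf k) (ψf l) - (if i = k ∧ j = l then lam else 0))‖ :=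
            norm_sum_le _ _
        _ ≤ ∑ i : Fin n, ∑ j : Fin n, ‖A i j *
            (g (σf i) (ψf j) (σf k) (ψf l) - (if i = k ∧ j = l then lam else 0))‖ :=
            Finset.sum_le_sum fun i _ => norm_sum_le _ _
        _ ≤ ∑ _i : Fin n, ∑ _j : Fin n, ‖A‖ * δ :=
            Finset.sum_le_sum fun i _ => Finset.sum_le_sum fun j _ => hterm i j
        _ = (n:ℝ)^2 * (‖A‖ * δ) := by
            rw [Finset.sum_const, Finset.sum_const, Finset.card_univ, Fintype.card_fin,
              nsmul_eq_mul, nsmul_eq_mul]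
            push_cast
            ring
    · have hlk : l < k := not_le.mp hkl
      have hC0 : ((T ⟨Jmap σf ψf A, hJ⟩ : upperTriangular N) : Matrix (Fin N) (Fin N) ℂ)
          (σf k) (ψf l) = 0 :=
        (T ⟨Jmap σf ψf A, hJ⟩).2 (σf k) (ψf l) (hlt2 l k hlk)
      have hA0 : A k l = 0 := hA k l hlk
      have : (Cmap σf ψf ((T ⟨Jmap σf ψf A, hJ⟩ : upperTriangular N) :
          Matrix (Fin N) (Fin N) ℂ) - lam • A) k l = 0 := by
        rw [Matrix.sub_apply, Matrix.smul_apply, smul_eq_mul, hA0, mul_zero, sub_zero]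
        exact hC0
      rw [this, norm_zero]
      exact mul_nonneg (by positivity) (mul_nonneg (norm_nonneg A) hδ0)
  calc ‖Cmap σf ψf ((T ⟨Jmap σf ψf A, hJ⟩ : upperTriangular N) : Matrix (Fin N) (Fin N) ℂ)
        - lam • A‖
      ≤ ∑ k : Fin n, ∑ l : Fin n,
          ‖(Cmap σf ψf ((T ⟨Jmap σf ψf A, hJ⟩ : upperTriangular N) :
            Matrix (Fin N) (Fin N) ℂ) - lam • A) k l‖ := TCaux.norm_le_sum_entries _
    _ ≤ ∑ _k : Fin n, ∑ _l : Fin n, (n:ℝ)^2 * (‖A‖ * δ) :=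
        Finset.sum_le_sum fun k _ => Finset.sum_le_sum fun l _ => hDentry k l
    _ = (n:ℝ)^4 * δ * ‖A‖ := by
        rw [Finset.sum_const, Finset.sum_const, Finset.card_univ, Fintype.card_fin,
          nsmul_eq_mul, nsmul_eq_mul]
        push_cast
        ring
    _ ≤ ε * ‖A‖ := mul_le_mul_of_nonneg_right hδfinal (norm_nonneg A)
end

section
/- For all n, m ∈ ℕ and every ε > 0 there exists N₀ ∈ ℕ with the following property: for every N > N₀ and every n-dimensional linear subspace E of T_N, there exist indices σ(1) < ψ(1) < σ(2) < ψ(2) < ⋯ < σ(m) < ψ(m) in {1, …, N} such that the block projection q : T_N → T_N, defined by (q(B))(i,j) = B(i,j) if i ∈ {σ(1),…,σ(m)} and j ∈ {ψ(1),…,ψ(m)}, and (q(B))(i,j) = 0 otherwise, satisfies ‖q(x)‖ ≤ ε ‖x‖ for every x ∈ E. -/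
open scoped Matrix.Norms.L2Operator

set_option maxHeartbeats 1000000
set_option synthInstance.maxHeartbeats 400000

section Helpers
open Matrix Finset
set_option maxHeartbeats 1000000
set_option synthInstance.maxHeartbeats 400000

lemma euclid_coord_le {ι : Type*} [Fintype ι] (y : EuclideanSpace ℂ ι) (i : ι) :
    ‖y i‖ ≤ ‖y‖ := by
  rw [EuclideanSpace.norm_eq]
  calc ‖y i‖ = Real.sqrt (‖y i‖ ^ 2) := (Real.sqrt_sq (norm_nonneg _)).symm
    _ ≤ _ := Real.sqrt_le_sqrt <|
        Finset.single_le_sum (f := fun j => ‖y j‖ ^ 2) (fun j _ => by positivity)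
          (Finset.mem_univ i)

lemma euclid_norm_le_sum {ι : Type*} [Fintype ι] (y : EuclideanSpace ℂ ι) :
    ‖y‖ ≤ ∑ i, ‖y i‖ := by
  rw [EuclideanSpace.norm_eq]
  have h := Finset.sum_sq_le_sq_sum_of_nonneg (s := Finset.univ) (f := fun i => ‖y i‖)
    (fun i _ => norm_nonneg _)
  calc Real.sqrt (∑ i, ‖y i‖ ^ 2) ≤ Real.sqrt ((∑ i, ‖y i‖) ^ 2) := Real.sqrt_le_sqrt h
    _ = ∑ i, ‖y i‖ := Real.sqrt_sq (by positivity)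

lemma opNorm_le_sum_entries {N : ℕ} (A : Matrix (Fin N) (Fin N) ℂ) :
    ‖A‖ ≤ ∑ p : Fin N × Fin N, ‖A p.1 p.2‖ := by
  rw [Matrix.l2_opNorm_def]
  refine ContinuousLinearMap.opNorm_le_bound _ (by positivity) (fun v => ?_)
  have h1 : ∀ a : Fin N,
      ‖(Matrix.toEuclideanLin A v : EuclideanSpace ℂ (Fin N)) a‖ ≤ (∑ b, ‖A a b‖) * ‖v‖ := by
    intro a
    have : (Matrix.toEuclideanLin A v : EuclideanSpace ℂ (Fin N)) a = ∑ b, A a b * v b := rfl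
    rw [this]
    calc ‖∑ b, A a b * v b‖ ≤ ∑ b, ‖A a b * v b‖ := norm_sum_le _ _
      _ ≤ ∑ b, ‖A a b‖ * ‖v‖ := Finset.sum_le_sum (fun b _ => by
          rw [norm_mul]
          exact mul_le_mul_of_nonneg_left (euclid_coord_le v b) (norm_nonneg _))
      _ = (∑ b, ‖A a b‖) * ‖v‖ := (Finset.sum_mul _ _ _).symm
  calc ‖(Matrix.toEuclideanLin A).toContinuousLinearMap v‖
      = ‖(Matrix.toEuclideanLin A v : EuclideanSpace ℂ (Fin N))‖ := rfl
    _ ≤ ∑ a, ‖(Matrix.toEuclideanLin A v : EuclideanSpace ℂ (Fin N)) a‖ := euclid_norm_le_sum _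
    _ ≤ ∑ a, (∑ b, ‖A a b‖) * ‖v‖ := Finset.sum_le_sum fun a _ => h1 a
    _ = (∑ p : Fin N × Fin N, ‖A p.1 p.2‖) * ‖v‖ := by
        rw [← Finset.sum_mul, Fintype.sum_prod_type]

lemma col_sq_sum_le {N : ℕ} (A : Matrix (Fin N) (Fin N) ℂ) (j : Fin N) :
    ∑ a, ‖A a j‖ ^ 2 ≤ ‖A‖ ^ 2 := by
  have h := Matrix.l2_opNorm_mulVec A (EuclideanSpace.single j (1 : ℂ))
  rw [EuclideanSpace.norm_single, norm_one, mul_one] at h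
  have hcol : (A *ᵥ (EuclideanSpace.single j (1:ℂ) : EuclideanSpace ℂ (Fin N))) = fun a => A a j := by
    funext a
    simp [Matrix.mulVec, dotProduct, EuclideanSpace.single, Pi.single_apply, mul_ite]
  rw [hcol] at h
  have hn : ‖(EuclideanSpace.equiv (Fin N) ℂ).symm (fun a => A a j)‖
      = Real.sqrt (∑ a, ‖A a j‖ ^ 2) := by
    rw [EuclideanSpace.norm_eq]
    rfl
  rw [hn] at h
  have h0 : (0:ℝ) ≤ Real.sqrt (∑ a, ‖A a j‖ ^ 2) := Real.sqrt_nonneg _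
  have h2 : Real.sqrt (∑ a, ‖A a j‖ ^ 2) ^ 2 = ∑ a, ‖A a j‖ ^ 2 :=
    Real.sq_sqrt (by positivity)
  nlinarith

lemma exists_indep {V : Type*} [DecidableEq V] (R : V → V → Prop) [DecidableRel R]
    (hsym : ∀ a b, R a b → R b a) (K : ℕ) :
    ∀ (j : ℕ) (S : Finset V), (∀ v ∈ S, (S.filter (R v)).card ≤ K) → j * (K + 1) ≤ S.card →
      ∃ T : Finset V, T ⊆ S ∧ T.card = j ∧ ∀ a ∈ T, ∀ b ∈ T, a ≠ b → ¬ R a b := by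
  intro j
  induction j with
  | zero => intro S _ _; exact ⟨∅, by simp⟩
  | succ j ih =>
    intro S hdeg hcard
    have hS : S.Nonempty := by
      rw [← Finset.card_pos]
      have : 1 ≤ (j+1) * (K+1) := Nat.one_le_iff_ne_zero.mpr (by positivity)
      omega
    obtain ⟨v, hv⟩ := hS
    set W : Finset V := insert v (S.filter (R v)) with hW
    have hWcard : W.card ≤ K + 1 := by
      refine (Finset.card_insert_le _ _).trans ?_
      exact Nat.add_le_add_right (hdeg v hv) 1
    set S' : Finset V := S \ W with hS'
    have hsub : S' ⊆ S := Finset.sdiff_subset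
    have hcard' : j * (K + 1) ≤ S'.card := by
      have h2 : S.card - W.card ≤ S'.card := by
        rw [hS']; exact Finset.le_card_sdiff W S
      have : (j+1) * (K+1) = j * (K+1) + (K+1) := by ring
      omega
    have hdeg' : ∀ w ∈ S', (S'.filter (R w)).card ≤ K := fun w hw =>
      le_trans (Finset.card_le_card (Finset.filter_subset_filter _ hsub)) (hdeg w (hsub hw))
    obtain ⟨T, hTsub, hTcard, hTind⟩ := ih S' hdeg' hcard'
    have hvT : v ∉ T := by
      intro hvT
      have := hTsub hvT
      rw [hS', Finset.mem_sdiff] at this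
      exact this.2 (Finset.mem_insert_self _ _)
    refine ⟨insert v T, ?_, ?_, ?_⟩
    · intro a ha
      rcases Finset.mem_insert.mp ha with rfl | h
      · exact hv
      · exact hsub (hTsub h)
    · rw [Finset.card_insert_of_notMem hvT, hTcard]
    · have key : ∀ b ∈ T, ¬ R v b := by
        intro b hb hR
        have hbS' := hTsub hb
        rw [hS', Finset.mem_sdiff] at hbS'
        exact hbS'.2 (Finset.mem_insert_of_mem (Finset.mem_filter.mpr ⟨hbS'.1, hR⟩))
      intro a ha b hb hab
      rcases Finset.mem_insert.mp ha with rfl | ha' <;> rcases Finset.mem_insert.mp hb with rfl | hb'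
      · exact absurd rfl hab
      · exact key b hb'
      · exact fun hR => key a ha' (hsym _ _ hR)
      · exact hTind a ha' b hb' hab

lemma fiber_card {V : Type*} [Fintype V] [DecidableEq V] (B : Finset (V × V)) (v : V) :
    (B.filter fun p => p.1 = v).card = (univ.filter fun w => (v, w) ∈ B).card := by
  refine Finset.card_bij (fun p _ => p.2) ?_ ?_ ?_
  · intro p hp
    rw [Finset.mem_filter] at hp ⊢
    refine ⟨mem_univ _, ?_⟩
    have : p = (v, p.2) := by rw [← hp.2]
    rw [← this]; exact hp.1
  · intro p hp q hq h
    rw [Finset.mem_filter] at hp hq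
    ext
    · rw [hp.2, hq.2]
    · exact h
  · intro w hw
    rw [Finset.mem_filter] at hw
    exact ⟨(v, w), Finset.mem_filter.mpr ⟨hw.2, rfl⟩, rfl⟩

lemma fiber_card' {V : Type*} [Fintype V] [DecidableEq V] (B : Finset (V × V)) (v : V) :
    (B.filter fun p => p.2 = v).card = (univ.filter fun w => (w, v) ∈ B).card := by
  refine Finset.card_bij (fun p _ => p.1) ?_ ?_ ?_
  · intro p hp
    rw [Finset.mem_filter] at hp ⊢
    refine ⟨mem_univ _, ?_⟩
    have : p = (p.1, v) := by rw [← hp.2]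
    rw [← this]; exact hp.1
  · intro p hp q hq h
    rw [Finset.mem_filter] at hp hq
    ext
    · exact h
    · rw [hp.2, hq.2]
  · intro w hw
    rw [Finset.mem_filter] at hw
    exact ⟨(w, v), Finset.mem_filter.mpr ⟨hw.2, rfl⟩, rfl⟩

lemma sum_deg_le {V : Type*} [Fintype V] [DecidableEq V] (B : Finset (V × V)) :
    ∑ v : V, (univ.filter fun w => (v, w) ∈ B ∨ (w, v) ∈ B).card ≤ 2 * B.card := by
  have hfst : ∑ v : V, (univ.filter fun w => (v, w) ∈ B).card = B.card := by
    rw [Finset.card_eq_sum_card_fiberwise (f := Prod.fst) (t := univ) (fun p _ => mem_univ _)]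
    exact Finset.sum_congr rfl fun v _ => (fiber_card B v).symm
  have hsnd : ∑ v : V, (univ.filter fun w => (w, v) ∈ B).card = B.card := by
    rw [Finset.card_eq_sum_card_fiberwise (f := Prod.snd) (t := univ) (fun p _ => mem_univ _)]
    exact Finset.sum_congr rfl fun v _ => (fiber_card' B v).symm
  calc ∑ v : V, (univ.filter fun w => (v, w) ∈ B ∨ (w, v) ∈ B).card
      ≤ ∑ v : V, ((univ.filter fun w => (v, w) ∈ B).card + (univ.filter fun w => (w, v) ∈ B).card) := by
        refine Finset.sum_le_sum fun v _ => ?_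
        rw [Finset.filter_or]
        exact Finset.card_union_le _ _
    _ = 2 * B.card := by rw [Finset.sum_add_distrib, hfst, hsnd]; ring

lemma card_large_le {ι : Type*} [Fintype ι] (v : EuclideanSpace ℂ ι) (hv : ‖v‖ = 1)
    {t : ℝ} (ht : 0 < t) [DecidablePred fun p => t < ‖v p‖] :
    ((univ.filter fun p => t < ‖v p‖).card : ℝ) ≤ 1 / t ^ 2 := by
  have hsum : ∑ p, ‖v p‖ ^ 2 = 1 := by
    have : ‖v‖ ^ 2 = ∑ p, ‖v p‖ ^ 2 := by
      rw [EuclideanSpace.norm_eq, Real.sq_sqrt (by positivity)]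
    rw [hv] at this
    linarith
  have h1 : ((univ.filter fun p => t < ‖v p‖).card : ℝ) * t ^ 2
      ≤ ∑ p ∈ univ.filter fun p => t < ‖v p‖, ‖v p‖ ^ 2 := by
    have := Finset.card_nsmul_le_sum (univ.filter fun p => t < ‖v p‖)
      (fun p => ‖v p‖ ^ 2) (t ^ 2) (fun p hp => by
        have := (Finset.mem_filter.mp hp).2
        show t ^ 2 ≤ ‖v p‖ ^ 2
        nlinarith [norm_nonneg (v p)])
    simpa [nsmul_eq_mul] using this
  have h2 : ∑ p ∈ univ.filter fun p => t < ‖v p‖, ‖v p‖ ^ 2 ≤ 1 := by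
    rw [← hsum]
    exact Finset.sum_le_sum_of_subset_of_nonneg (Finset.filter_subset _ _)
      (fun p _ _ => by positivity)
  rw [le_div_iff₀ (by positivity)]
  linarith

noncomputable def entryMapL (N : ℕ) : Matrix (Fin N) (Fin N) ℂ →ₗ[ℂ] EuclideanSpace ℂ (Fin N × Fin N) where
  toFun A := (WithLp.equiv 2 _).symm fun p => A p.1 p.2
  map_add' A B := rfl
  map_smul' c A := rfl

noncomputable def evalL {N : ℕ} (p : Fin N × Fin N) :
    EuclideanSpace ℂ (Fin N × Fin N) →ₗ[ℂ] ℂ :=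
  (LinearMap.proj p).comp (WithLp.linearEquiv 2 ℂ (Fin N × Fin N → ℂ)).toLinearMap

lemma entry_bound {N : ℕ} (F : Submodule ℂ (EuclideanSpace ℂ (Fin N × Fin N)))
    (b : OrthonormalBasis (Fin (Module.finrank ℂ ↥F)) ℂ ↥F) (y : ↥F) (p : Fin N × Fin N)
    {t : ℝ} (hp : ∀ i, ‖((b i : ↥F) : EuclideanSpace ℂ (Fin N × Fin N)) p‖ ≤ t) :
    ‖((y : EuclideanSpace ℂ (Fin N × Fin N))) p‖ ≤ (Module.finrank ℂ ↥F) * (t * ‖y‖) := by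
  have hrep := b.sum_repr y
  have h1 : ((y : EuclideanSpace ℂ (Fin N × Fin N))) p
      = ∑ i, b.repr y i * ((b i : ↥F) : EuclideanSpace ℂ (Fin N × Fin N)) p := by
    have h2 := congrArg ((evalL p).comp F.subtype) hrep.symm
    rw [map_sum] at h2
    simpa [evalL, smul_eq_mul] using h2
  rw [h1]
  calc ‖∑ i, b.repr y i * ((b i : ↥F) : EuclideanSpace ℂ (Fin N × Fin N)) p‖
      ≤ ∑ i, ‖b.repr y i * ((b i : ↥F) : EuclideanSpace ℂ (Fin N × Fin N)) p‖ :=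
        norm_sum_le _ _
    _ ≤ ∑ _i : Fin (Module.finrank ℂ ↥F), ‖y‖ * t := by
        refine Finset.sum_le_sum fun i _ => ?_
        rw [norm_mul]
        have hc : ‖b.repr y i‖ ≤ ‖y‖ := by
          have := euclid_coord_le (b.repr y) i
          rwa [LinearIsometryEquiv.norm_map] at this
        exact mul_le_mul hc (hp i) (norm_nonneg _) (norm_nonneg _)
    _ = (Module.finrank ℂ ↥F) * (t * ‖y‖) := by
        rw [Finset.sum_const, Finset.card_univ, Fintype.card_fin, nsmul_eq_mul]; ring

end Helpers

/-- The block projection with row set `{σ 1, …, σ m}` and column set `{ψ 1, …, ψ m}`: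
keeps entries whose row index is some `σ k` and column index is some `ψ l`,
all other entries become `0`. -/
noncomputable def blockProjection {m N : ℕ} (σ ψ : Fin m → Fin N)
    (B : Matrix (Fin N) (Fin N) ℂ) : Matrix (Fin N) (Fin N) ℂ :=
  Matrix.of fun i j => if (∃ k : Fin m, i = σ k) ∧ (∃ l : Fin m, j = ψ l) then B i j else 0

/-- for all `n`, `m` and `ε > 0` there is `N₀` such that for every `N > N₀`
and every `n`-dimensional subspace `E` of `T_N` there are interlacing indices
`σ 1 < ψ 1 < σ 2 < ψ 2 < ⋯ < σ m < ψ m` whose block projection `q` satisfies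
`‖q x‖ ≤ ε ‖x‖` on `E`. -/
theorem block_projection_small_on_subspace (n m : ℕ) (ε : ℝ) (hε : 0 < ε) :
    ∃ N₀ : ℕ, ∀ N : ℕ, N₀ < N →
      ∀ E : Submodule ℂ (upperTriangular N), Module.finrank ℂ E = n →
        ∃ σ ψ : Fin m → Fin N,
          (∀ i : Fin m, σ i < ψ i) ∧
          (∀ i j : Fin m, i < j → ψ i < σ j) ∧
          ∀ x : upperTriangular N, x ∈ E →
            ‖blockProjection σ ψ (x : Matrix (Fin N) (Fin N) ℂ)‖ ≤ ε * ‖x‖ := by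
  classical
  set D : ℝ := (m : ℝ) ^ 2 * n + 1 with hDdef
  have hD1 : (1 : ℝ) ≤ D := le_add_of_nonneg_left (by positivity)
  have hD0 : (0 : ℝ) < D := lt_of_lt_of_le one_pos hD1
  set C : ℕ := ⌈(n : ℝ) * D ^ 2 / ε ^ 2⌉₊ with hCdef
  set K : ℕ := 4 * C with hKdef
  set A : ℕ := 2 * m * (K + 1) with hAdef
  refine ⟨2 * A, fun N hN E hE => ?_⟩
  have hN1 : 0 < N := lt_of_le_of_lt (Nat.zero_le _) hN
  have hsq : 0 < Real.sqrt N := Real.sqrt_pos.mpr (by exact_mod_cast hN1)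
  set t : ℝ := ε / (D * Real.sqrt N) with htdef
  have ht0 : 0 < t := div_pos hε (by positivity)
  -- the embedding into Euclidean space
  set Φ : ↥(upperTriangular N) →ₗ[ℂ] EuclideanSpace ℂ (Fin N × Fin N) :=
    (entryMapL N).comp (upperTriangular N).subtype with hΦdef
  have hΦentry : ∀ (x : ↥(upperTriangular N)) (p : Fin N × Fin N),
      (Φ x) p = (x : Matrix (Fin N) (Fin N) ℂ) p.1 p.2 := fun x p => rfl
  have hΦinj : Function.Injective Φ := by
    intro x y hxy
    have h1 : ∀ p : Fin N × Fin N,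
        (x : Matrix (Fin N) (Fin N) ℂ) p.1 p.2 = (y : Matrix (Fin N) (Fin N) ℂ) p.1 p.2 :=
      fun p => congrFun (congrArg (WithLp.equiv 2 (Fin N × Fin N → ℂ)) hxy) p
    exact Subtype.ext (Matrix.ext fun a c => h1 (a, c))
  set F : Submodule ℂ (EuclideanSpace ℂ (Fin N × Fin N)) := E.map Φ with hFdef
  have hdim : Module.finrank ℂ ↥F = n := by
    rw [hFdef, ← hE]
    exact ((Submodule.equivMapOfInjective Φ hΦinj E).finrank_eq).symm
  set b := stdOrthonormalBasis ℂ ↥F with hbdef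
  set Bad : Finset (Fin N × Fin N) := Finset.univ.filter
    (fun p => ∃ i, t < ‖((b i : ↥F) : EuclideanSpace ℂ (Fin N × Fin N)) p‖) with hBaddef
  -- cardinality of the bad set
  have hBadR : (Bad.card : ℝ) ≤ (n : ℝ) * (D ^ 2 * N / ε ^ 2) := by
    have hsub : Bad ⊆ Finset.univ.biUnion (fun i : Fin (Module.finrank ℂ ↥F) =>
        Finset.univ.filter fun p => t < ‖((b i : ↥F) : EuclideanSpace ℂ (Fin N × Fin N)) p‖) := by
      intro p hp
      obtain ⟨i, hi⟩ := (Finset.mem_filter.mp hp).2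
      exact Finset.mem_biUnion.mpr ⟨i, Finset.mem_univ _, Finset.mem_filter.mpr ⟨Finset.mem_univ _, hi⟩⟩
    have h1 : Bad.card ≤ ∑ i : Fin (Module.finrank ℂ ↥F),
        (Finset.univ.filter fun p =>
          t < ‖((b i : ↥F) : EuclideanSpace ℂ (Fin N × Fin N)) p‖).card :=
      le_trans (Finset.card_le_card hsub) (Finset.card_biUnion_le)
    have h2 : ∀ i : Fin (Module.finrank ℂ ↥F),
        ((Finset.univ.filter fun p =>
          t < ‖((b i : ↥F) : EuclideanSpace ℂ (Fin N × Fin N)) p‖).card : ℝ) ≤ 1 / t ^ 2 := by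
      intro i
      refine card_large_le _ ?_ ht0
      exact b.orthonormal.1 i
    have h3 : 1 / t ^ 2 = D ^ 2 * N / ε ^ 2 := by
      rw [htdef]
      rw [div_pow, one_div_div, mul_pow, Real.sq_sqrt (Nat.cast_nonneg N)]
    calc (Bad.card : ℝ) ≤ ∑ i : Fin (Module.finrank ℂ ↥F), (1 / t ^ 2) := by
          calc (Bad.card : ℝ) ≤ (∑ i : Fin (Module.finrank ℂ ↥F),
              (Finset.univ.filter fun p =>
                t < ‖((b i : ↥F) : EuclideanSpace ℂ (Fin N × Fin N)) p‖).card : ℕ) := by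
                exact_mod_cast h1
            _ = ∑ i : Fin (Module.finrank ℂ ↥F), ((Finset.univ.filter fun p =>
                t < ‖((b i : ↥F) : EuclideanSpace ℂ (Fin N × Fin N)) p‖).card : ℝ) := by
                push_cast; rfl
            _ ≤ _ := Finset.sum_le_sum fun i _ => h2 i
      _ = (n : ℝ) * (D ^ 2 * N / ε ^ 2) := by
          rw [Finset.sum_const, Finset.card_univ, Fintype.card_fin, hdim, nsmul_eq_mul, h3]
  have hBadN : Bad.card ≤ C * N := by
    have hceil : (n : ℝ) * D ^ 2 / ε ^ 2 ≤ (C : ℝ) := Nat.le_ceil _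
    have h4 : (Bad.card : ℝ) ≤ (C : ℝ) * N := by
      calc (Bad.card : ℝ) ≤ (n : ℝ) * (D ^ 2 * N / ε ^ 2) := hBadR
        _ = ((n : ℝ) * D ^ 2 / ε ^ 2) * N := by ring
        _ ≤ (C : ℝ) * N := mul_le_mul_of_nonneg_right hceil (Nat.cast_nonneg N)
    exact_mod_cast h4
  -- the graph of bad pairs
  set R : Fin N → Fin N → Prop := fun a c => (a, c) ∈ Bad ∨ (c, a) ∈ Bad with hRdef
  have hRsym : ∀ a c, R a c → R c a := fun a c h => Or.symm h
  have hsumdeg : ∑ v, (Finset.univ.filter (R v)).card ≤ 2 * (C * N) := by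
    calc ∑ v, (Finset.univ.filter (R v)).card ≤ 2 * Bad.card := sum_deg_le Bad
      _ ≤ 2 * (C * N) := by omega
  set badV : Finset (Fin N) := Finset.univ.filter
    (fun v => K < (Finset.univ.filter (R v)).card) with hbadVdef
  have h2b : 2 * badV.card ≤ N := by
    have step1 : badV.card * (K + 1) ≤ 2 * (C * N) := by
      have h5 := Finset.card_nsmul_le_sum badV (fun v => (Finset.univ.filter (R v)).card) (K + 1)
        (fun v hv => (Finset.mem_filter.mp hv).2)
      rw [smul_eq_mul] at h5
      refine le_trans h5 (le_trans ?_ hsumdeg)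
      exact Finset.sum_le_sum_of_subset (Finset.subset_univ _)
    have step2 : (2 * badV.card) * (K + 1) ≤ N * (K + 1) := by
      calc (2 * badV.card) * (K + 1) = 2 * (badV.card * (K + 1)) := by ring
        _ ≤ 2 * (2 * (C * N)) := by omega
        _ = N * (4 * C) := by ring
        _ ≤ N * (K + 1) := Nat.mul_le_mul_left N (by omega)
    exact Nat.le_of_mul_le_mul_right step2 (Nat.succ_pos K)
  set goodV : Finset (Fin N) := Finset.univ \ badV with hgoodVdef
  have hgcard : A ≤ goodV.card := by
    have h1 : goodV.card = N - badV.card := by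
      rw [hgoodVdef, Finset.card_sdiff_of_subset (Finset.subset_univ _), Finset.card_univ, Fintype.card_fin]
    omega
  have hgdeg : ∀ v ∈ goodV, (goodV.filter (R v)).card ≤ K := by
    intro v hv
    have hv' : ¬ K < (Finset.univ.filter (R v)).card := by
      rw [hgoodVdef, Finset.mem_sdiff, hbadVdef, Finset.mem_filter] at hv
      exact fun h => hv.2 ⟨Finset.mem_univ _, h⟩
    exact le_trans (Finset.card_le_card
      (Finset.filter_subset_filter _ (Finset.subset_univ _))) (by omega)
  obtain ⟨T, hTsub, hTcard, hTind⟩ := exists_indep R hRsym K (2 * m) goodV hgdeg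
    (by rw [hAdef] at hgcard; exact hgcard)
  set g := T.orderEmbOfFin hTcard with hgdef
  set σ : Fin m → Fin N := fun k => g ⟨2 * (k : ℕ), by omega⟩ with hσdef
  set ψ : Fin m → Fin N := fun k => g ⟨2 * (k : ℕ) + 1, by omega⟩ with hψdef
  refine ⟨σ, ψ, ?_, ?_, ?_⟩
  · intro i
    exact (T.orderEmbOfFin hTcard).strictMono (by rw [Fin.mk_lt_mk]; omega)
  · intro i j hij
    have hij' : (i : ℕ) < j := hij
    exact (T.orderEmbOfFin hTcard).strictMono (by rw [Fin.mk_lt_mk]; omega)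
  · intro x hx
    have hxnorm : ‖x‖ = ‖(x : Matrix (Fin N) (Fin N) ℂ)‖ := rfl
    set y : ↥F := ⟨Φ x, Submodule.mem_map_of_mem hx⟩ with hydef
    have hynorm : ‖y‖ ≤ Real.sqrt N * ‖x‖ := by
      have h1 : ‖y‖
          = Real.sqrt (∑ p : Fin N × Fin N, ‖(x : Matrix (Fin N) (Fin N) ℂ) p.1 p.2‖ ^ 2) := by
        rw [show ‖y‖ = ‖(y : EuclideanSpace ℂ (Fin N × Fin N))‖ from rfl, EuclideanSpace.norm_eq]
        rfl
      have h2 : ∑ p : Fin N × Fin N, ‖(x : Matrix (Fin N) (Fin N) ℂ) p.1 p.2‖ ^ 2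
          ≤ (N : ℝ) * ‖(x : Matrix (Fin N) (Fin N) ℂ)‖ ^ 2 := by
        rw [Fintype.sum_prod_type, Finset.sum_comm]
        calc ∑ j : Fin N, ∑ a : Fin N, ‖(x : Matrix (Fin N) (Fin N) ℂ) a j‖ ^ 2
            ≤ ∑ _j : Fin N, ‖(x : Matrix (Fin N) (Fin N) ℂ)‖ ^ 2 :=
              Finset.sum_le_sum fun j _ => col_sq_sum_le _ j
          _ = (N : ℝ) * ‖(x : Matrix (Fin N) (Fin N) ℂ)‖ ^ 2 := by
              rw [Finset.sum_const, Finset.card_univ, Fintype.card_fin, nsmul_eq_mul]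
      rw [h1, hxnorm]
      calc Real.sqrt (∑ p : Fin N × Fin N, ‖(x : Matrix (Fin N) (Fin N) ℂ) p.1 p.2‖ ^ 2)
          ≤ Real.sqrt ((N : ℝ) * ‖(x : Matrix (Fin N) (Fin N) ℂ)‖ ^ 2) := Real.sqrt_le_sqrt h2
        _ = Real.sqrt N * ‖(x : Matrix (Fin N) (Fin N) ℂ)‖ := by
            rw [Real.sqrt_mul (Nat.cast_nonneg N), Real.sqrt_sq (norm_nonneg _)]
    have hxent : ∀ p : Fin N × Fin N, p ∉ Bad →
        ‖(x : Matrix (Fin N) (Fin N) ℂ) p.1 p.2‖ ≤ (n : ℝ) * (t * (Real.sqrt N * ‖x‖)) := by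
      intro p hp
      have hpt : ∀ i, ‖((b i : ↥F) : EuclideanSpace ℂ (Fin N × Fin N)) p‖ ≤ t := by
        intro i
        by_contra h
        exact hp (Finset.mem_filter.mpr ⟨Finset.mem_univ _, ⟨i, not_le.mp h⟩⟩)
      have h3 := entry_bound F b y p hpt
      rw [hdim] at h3
      have h4 : ((y : EuclideanSpace ℂ (Fin N × Fin N))) p
          = (x : Matrix (Fin N) (Fin N) ℂ) p.1 p.2 := rfl
      rw [h4] at h3
      calc ‖(x : Matrix (Fin N) (Fin N) ℂ) p.1 p.2‖ ≤ (n : ℝ) * (t * ‖y‖) := h3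
        _ ≤ (n : ℝ) * (t * (Real.sqrt N * ‖x‖)) := by
            refine mul_le_mul_of_nonneg_left ?_ (Nat.cast_nonneg n)
            exact mul_le_mul_of_nonneg_left hynorm ht0.le
    set P : Finset (Fin N × Fin N) := Finset.univ.filter
      (fun p : Fin N × Fin N => (∃ k, p.1 = σ k) ∧ (∃ l, p.2 = ψ l)) with hPdef
    have hPBad : ∀ p ∈ P, p ∉ Bad := by
      intro p hp
      obtain ⟨⟨k, hk⟩, ⟨l, hl⟩⟩ := (Finset.mem_filter.mp hp).2
      have hσT : σ k ∈ T := T.orderEmbOfFin_mem hTcard _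
      have hψT : ψ l ∈ T := T.orderEmbOfFin_mem hTcard _
      have hne : σ k ≠ ψ l := by
        intro h
        have h6 := g.injective h
        rw [Fin.mk.injEq] at h6
        omega
      have h7 := hTind (σ k) hσT (ψ l) hψT hne
      intro hpB
      apply h7
      left
      have h9 : ((σ k, ψ l) : Fin N × Fin N) = p := by rw [← hk, ← hl]
      rwa [h9]
    have hPcard : P.card ≤ m * m := by
      have hsub2 : P ⊆ Finset.image (fun kl : Fin m × Fin m => (σ kl.1, ψ kl.2)) Finset.univ := by
        intro p hp
        obtain ⟨⟨k, hk⟩, ⟨l, hl⟩⟩ := (Finset.mem_filter.mp hp).2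
        refine Finset.mem_image.mpr ⟨(k, l), Finset.mem_univ _, ?_⟩
        show (σ k, ψ l) = p
        rw [← hk, ← hl]
      calc P.card ≤ _ := Finset.card_le_card hsub2
        _ ≤ (Finset.univ : Finset (Fin m × Fin m)).card := Finset.card_image_le
        _ = m * m := by simp
    have htsq : t * Real.sqrt N = ε / D := by
      rw [htdef]
      field_simp
    have hmn : (m : ℝ) * m * n ≤ D := by rw [hDdef]; nlinarith [sq_nonneg (m : ℝ)]
    have h8 : (m : ℝ) * m * n * (t * Real.sqrt N) ≤ ε := by
      rw [htsq]
      calc (m : ℝ) * m * n * (ε / D) ≤ D * (ε / D) :=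
          mul_le_mul_of_nonneg_right hmn (by positivity)
        _ = ε := by field_simp
    have hkey : (↑(m * m) : ℝ) * ((n : ℝ) * (t * (Real.sqrt N * ‖x‖))) ≤ ε * ‖x‖ := by
      calc (↑(m * m) : ℝ) * ((n : ℝ) * (t * (Real.sqrt N * ‖x‖)))
          = ((m : ℝ) * m * n * (t * Real.sqrt N)) * ‖x‖ := by push_cast; ring
        _ ≤ ε * ‖x‖ := mul_le_mul_of_nonneg_right h8 (norm_nonneg _)
    calc ‖blockProjection σ ψ (x : Matrix (Fin N) (Fin N) ℂ)‖
        ≤ ∑ p : Fin N × Fin N, ‖blockProjection σ ψ (x : Matrix (Fin N) (Fin N) ℂ) p.1 p.2‖ :=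
          opNorm_le_sum_entries _
      _ = ∑ p ∈ P, ‖(x : Matrix (Fin N) (Fin N) ℂ) p.1 p.2‖ := by
          rw [hPdef, Finset.sum_filter]
          refine Finset.sum_congr rfl fun p _ => ?_
          by_cases h : (∃ k, p.1 = σ k) ∧ (∃ l, p.2 = ψ l)
          · simp [blockProjection, h]
          · simp [blockProjection, h]
      _ ≤ ∑ p ∈ P, (n : ℝ) * (t * (Real.sqrt N * ‖x‖)) :=
          Finset.sum_le_sum fun p hp => hxent p (hPBad p hp)
      _ = P.card * ((n : ℝ) * (t * (Real.sqrt N * ‖x‖))) := by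
          rw [Finset.sum_const, nsmul_eq_mul]
      _ ≤ (↑(m * m) : ℝ) * ((n : ℝ) * (t * (Real.sqrt N * ‖x‖))) := by
          refine mul_le_mul_of_nonneg_right ?_ (by positivity)
          exact_mod_cast hPcard
      _ ≤ ε * ‖x‖ := hkey
end

section
/- For every m ∈ ℕ and every δ > 0 there exists N₀ ∈ ℕ with the following property: for every N > N₀ and every upper triangular N×N complex matrix x whose operator norm on ℂ^N is at most 1, there exists a subset ρ of {1, …, N} of cardinality m such that |x(i,j)| < δ for all i, j ∈ ρ with i < j. -/
open Matrix
open scoped Matrix.Norms.L2Operator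

-- row ℓ² bound
lemma row_sq_sum_le {N : ℕ} (x : Matrix (Fin N) (Fin N) ℂ) (hx : ‖x‖ ≤ 1) (i : Fin N) :
    ∑ j, ‖x i j‖ ^ 2 ≤ 1 := by
  classical
  set v : EuclideanSpace ℂ (Fin N) := EuclideanSpace.single i 1 with hv
  have hnv : ‖v‖ = 1 := by simp [hv]
  have h := Matrix.l2_opNorm_mulVec xᴴ v
  rw [Matrix.l2_opNorm_conjTranspose, hnv, mul_one] at h
  have hle : ‖(EuclideanSpace.equiv (Fin N) ℂ).symm <| xᴴ.mulVec v‖ ≤ 1 := h.trans hx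
  have hsq : ‖(EuclideanSpace.equiv (Fin N) ℂ).symm <| xᴴ.mulVec v‖ ^ 2 ≤ 1 := by
    nlinarith [norm_nonneg ((EuclideanSpace.equiv (Fin N) ℂ).symm <| xᴴ.mulVec v)]
  have hentry : ∀ j, (xᴴ.mulVec v) j = (starRingEnd ℂ) (x i j) := by
    intro j
    simp [Matrix.mulVec, dotProduct, Matrix.conjTranspose_apply, hv,
      EuclideanSpace.single_apply, Finset.sum_ite_eq']
  calc ∑ j, ‖x i j‖ ^ 2
      = ‖(EuclideanSpace.equiv (Fin N) ℂ).symm <| xᴴ.mulVec v‖ ^ 2 := by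
        rw [EuclideanSpace.norm_eq, Real.sq_sqrt (by positivity)]
        refine Finset.sum_congr rfl fun j _ => ?_
        simp [hentry j, Complex.norm_conj]
    _ ≤ 1 := hsq

-- each row has few large entries
lemma few_large {N : ℕ} (x : Matrix (Fin N) (Fin N) ℂ) (hx : ‖x‖ ≤ 1) {δ : ℝ} (hδ : 0 < δ)
    (i : Fin N) (T : Finset (Fin N)) (hT : ∀ j ∈ T, δ ≤ ‖x i j‖) :
    T.card ≤ ⌈δ⁻¹ ^ 2⌉₊ := by
  have h1 : (T.card : ℝ) * δ ^ 2 ≤ 1 := by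
    calc (T.card : ℝ) * δ ^ 2 = ∑ _j ∈ T, δ ^ 2 := by rw [Finset.sum_const, nsmul_eq_mul]
      _ ≤ ∑ j ∈ T, ‖x i j‖ ^ 2 := by
          refine Finset.sum_le_sum fun j hj => ?_
          exact pow_le_pow_left₀ hδ.le (hT j hj) 2
      _ ≤ ∑ j, ‖x i j‖ ^ 2 := by
          refine Finset.sum_le_sum_of_subset_of_nonneg (Finset.subset_univ T) ?_
          intro j _ _; positivity
      _ ≤ 1 := row_sq_sum_le x hx i
  have h2 : (T.card : ℝ) ≤ δ⁻¹ ^ 2 := by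
    have hδ2 : (0:ℝ) < δ ^ 2 := by positivity
    rw [inv_pow, inv_eq_one_div, le_div_iff₀ hδ2]
    linarith
  exact_mod_cast Nat.cast_le.mp (h2.trans (Nat.le_ceil _))

lemma greedy {N : ℕ} (x : Matrix (Fin N) (Fin N) ℂ) (hx : ‖x‖ ≤ 1) {δ : ℝ} (hδ : 0 < δ) :
    ∀ m : ℕ, ∀ S : Finset (Fin N), (⌈δ⁻¹ ^ 2⌉₊ + 1) * m ≤ S.card →
      ∃ ρ : Finset (Fin N), ρ ⊆ S ∧ ρ.card = m ∧
        ∀ i ∈ ρ, ∀ j ∈ ρ, i < j → ‖x i j‖ < δ := by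
  classical
  intro m
  induction m with
  | zero => exact fun S _ => ⟨∅, by simp⟩
  | succ m ih =>
    intro S hS
    set K := ⌈δ⁻¹ ^ 2⌉₊ with hK
    have hSne : S.Nonempty := by
      rw [← Finset.card_pos]
      have : 1 ≤ (K + 1) * (m + 1) := Nat.one_le_iff_ne_zero.mpr (by simp)
      omega
    set i₀ := S.min' hSne with hi₀
    set S' := (S.erase i₀).filter (fun j => ‖x i₀ j‖ < δ) with hS'
    have hbad : ((S.erase i₀).filter (fun j => ¬ ‖x i₀ j‖ < δ)).card ≤ K := by
      apply few_large x hx hδ i₀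
      intro j hj
      simpa using (Finset.mem_filter.mp hj).2
    have hsplit : S'.card + ((S.erase i₀).filter (fun j => ¬ ‖x i₀ j‖ < δ)).card
        = (S.erase i₀).card := Finset.card_filter_add_card_filter_not _
    have hcard' : (K + 1) * m ≤ S'.card := by
      have h1 : S.card - 1 = (S.erase i₀).card := (Finset.card_erase_of_mem (S.min'_mem hSne)).symm
      have h2 : (K + 1) * (m + 1) ≤ S.card := hS
      have hmul : (K + 1) * (m + 1) = (K + 1) * m + K + 1 := by ring
      have h3 : 1 ≤ S.card := hSne.card_pos
      omega
    obtain ⟨ρ', hρ'S, hρ'card, hρ'prop⟩ := ih S' hcard'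
    have hi₀notin : i₀ ∉ ρ' := fun h => Finset.notMem_erase i₀ S
      (Finset.mem_of_mem_filter i₀ (hρ'S h))
    refine ⟨insert i₀ ρ', ?_, ?_, ?_⟩
    · intro a ha
      rcases Finset.mem_insert.mp ha with rfl | ha
      · exact S.min'_mem hSne
      · exact Finset.mem_of_mem_erase (Finset.mem_of_mem_filter a (hρ'S ha))
    · rw [Finset.card_insert_of_notMem hi₀notin, hρ'card]
    · intro i hi j hj hij
      rcases Finset.mem_insert.mp hi with rfl | hi
      · rcases Finset.mem_insert.mp hj with rfl | hj
        · exact absurd hij (lt_irrefl _)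
        · exact (Finset.mem_filter.mp (hρ'S hj)).2
      · rcases Finset.mem_insert.mp hj with rfl | hj
        · -- j = i₀ but i ∈ ρ' ⊆ S, i₀ minimal, and i < i₀ : contradiction
          have hiS : i ∈ S := Finset.mem_of_mem_erase (Finset.mem_of_mem_filter i (hρ'S hi))
          exact absurd (S.min'_le i hiS) (not_le.mpr hij)
        · exact hρ'prop i hi j hj hij

/-- For every `m` and `δ > 0` there is `N₀` such that any upper triangular
`N × N` complex matrix (`N > N₀`) of operator norm at most `1` admits a subset
`ρ ⊆ {1, …, N}` of cardinality `m` with `|x i j| < δ` for all `i < j` in `ρ`. -/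
theorem upper_triangular_small_entries (m : ℕ) (δ : ℝ) (hδ : 0 < δ) :
    ∃ N₀ : ℕ, ∀ N : ℕ, N₀ < N →
      ∀ x : Matrix (Fin N) (Fin N) ℂ,
        (∀ i j : Fin N, j < i → x i j = 0) →
        ‖x‖ ≤ 1 →
        ∃ ρ : Finset (Fin N), ρ.card = m ∧
          ∀ i ∈ ρ, ∀ j ∈ ρ, i < j → ‖x i j‖ < δ := by
  refine ⟨(⌈δ⁻¹ ^ 2⌉₊ + 1) * m, fun N hN x _ hx => ?_⟩
  obtain ⟨ρ, _, hcard, hprop⟩ := greedy x hx hδ m Finset.univ (by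
    simpa [Finset.card_univ] using hN.le)
  exact ⟨ρ, hcard, hprop⟩
end

section
/- Let X be a complex Banach space, let p be an extended real number with 1 ≤ p ≤ ∞, and suppose X is isomorphic (via a continuous linear equivalence) to the ℓ_p-sum (∑⊕X)_p of countably many copies of X. If for every bounded linear operator T : X → X the identity of X factors through T or through I − T (i.e., there exist bounded linear operators A, B : X → X with A T B = I or A(I − T)B = I), then X is primary: for all complex Banach spaces Y and Z, if X is isomorphic to Y ⊕ Z then X is isomorphic to Y or X is isomorphic to Z. -/
set_option linter.unusedSectionVars false
set_option maxHeartbeats 1000000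
set_option linter.unusedVariables false

open ContinuousLinearMap
open scoped ENNReal

namespace PelAux

variable {p : ℝ≥0∞} [Fact (1 ≤ p)]

lemma p_ne_zero : p ≠ 0 := (lt_of_lt_of_le zero_lt_one (Fact.out : 1 ≤ p)).ne'

lemma p_cases : p = ∞ ∨ 0 < p.toReal := by
  rcases eq_or_ne p ∞ with h | h
  · exact Or.inl h
  · exact Or.inr (ENNReal.toReal_pos (p_ne_zero (p := p)) h)

lemma memℓp_of_norm_le {ι : Type*} {E F : ι → Type*} [∀ i, NormedAddCommGroup (E i)]
    [∀ i, NormedAddCommGroup (F i)] {f : ∀ i, E i} {g : ∀ i, F i} {C : ℝ}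
    (hf : Memℓp f p) (hC : 0 ≤ C) (h : ∀ i, ‖g i‖ ≤ C * ‖f i‖) : Memℓp g p := by
  rcases p_cases (p := p) with hp | hp
  · subst hp
    obtain ⟨M, hM⟩ := hf.bddAbove
    refine memℓp_infty ⟨C * M, ?_⟩
    rintro _ ⟨i, rfl⟩
    exact (h i).trans (mul_le_mul_of_nonneg_left (hM ⟨i, rfl⟩) hC)
  · refine memℓp_gen ?_
    refine Summable.of_nonneg_of_le (fun i => Real.rpow_nonneg (norm_nonneg _) _)
      (fun i => ?_) ((hf.summable hp).mul_left (C ^ p.toReal))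
    calc ‖g i‖ ^ p.toReal ≤ (C * ‖f i‖) ^ p.toReal :=
          Real.rpow_le_rpow (norm_nonneg _) (h i) hp.le
      _ = C ^ p.toReal * ‖f i‖ ^ p.toReal := Real.mul_rpow hC (norm_nonneg _)

lemma continuous_eval {ι : Type*} {F : ι → Type*} [∀ i, NormedAddCommGroup (F i)] (i : ι) :
    Continuous fun f : lp F p => f i := by
  refine (LipschitzWith.of_dist_le_mul (K := 1) fun f g => ?_).continuous
  rw [NNReal.coe_one, one_mul, dist_eq_norm, dist_eq_norm]
  have := lp.norm_apply_le_norm (p_ne_zero (p := p)) (f - g) i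
  simpa [lp.coeFn_sub] using this

lemma continuous_to_lp {G : Type*} [NormedAddCommGroup G] [NormedSpace ℂ G] [CompleteSpace G]
    {ι : Type*} {F : ι → Type*} [∀ i, NormedAddCommGroup (F i)] [∀ i, NormedSpace ℂ (F i)]
    [∀ i, CompleteSpace (F i)]
    (Φ : G →ₗ[ℂ] lp F p) (h : ∀ i, Continuous fun g : G => (Φ g : ∀ j, F j) i) :
    Continuous Φ := by
  refine Φ.continuous_of_isClosed_graph ?_
  have hgraph : (Φ.graph : Set (G × lp F p)) =
      ⋂ i, {x : G × lp F p | ((x.2 : ∀ j, F j) i) = ((Φ x.1 : ∀ j, F j) i)} := by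
    ext x
    simp only [SetLike.mem_coe, LinearMap.mem_graph_iff, Set.mem_iInter, Set.mem_setOf_eq]
    constructor
    · intro hx i; rw [hx]
    · intro hx
      exact lp.ext (funext hx)
  rw [hgraph]
  exact isClosed_iInter fun i =>
    isClosed_eq ((continuous_eval (p := p) i).comp continuous_snd) ((h i).comp continuous_fst)

section Maps

variable (p)
variable {ι : Type*} {X Y V : Type*}
  [NormedAddCommGroup X] [NormedSpace ℂ X] [CompleteSpace X]
  [NormedAddCommGroup Y] [NormedSpace ℂ Y] [CompleteSpace Y]
  [NormedAddCommGroup V] [NormedSpace ℂ V] [CompleteSpace V]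

/-- Map `lp` spaces by a fixed operator in each coordinate. -/
noncomputable def lpMap (T : X →L[ℂ] Y) : lp (fun _ : ι => X) p →L[ℂ] lp (fun _ : ι => Y) p :=
  ⟨{ toFun := fun f => ⟨fun i => T (f i),
        memℓp_of_norm_le (lp.memℓp f) (norm_nonneg T) fun i => T.le_opNorm _⟩
     map_add' := fun f g => by
        apply lp.ext; funext i
        show T ((f + g : lp _ _) i) = T (f i) + T (g i)
        rw [lp.coeFn_add]; simp
     map_smul' := fun c f => by
        apply lp.ext; funext i
        show T ((c • f : lp _ _) i) = (c • (_ : lp (fun _ : ι => Y) p)) i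
        rw [lp.coeFn_smul, lp.coeFn_smul]
        simp },
   continuous_to_lp _ fun i => T.continuous.comp (continuous_eval (p := p) i)⟩

@[simp] lemma lpMap_apply (T : X →L[ℂ] Y) (f : lp (fun _ : ι => X) p) (i : ι) :
    (lpMap p T f : ∀ _ : ι, Y) i = T (f i) := rfl

/-- The congruence equivalence of `lp` sums. -/
noncomputable def lpCongr (e : X ≃L[ℂ] Y) :
    lp (fun _ : ι => X) p ≃L[ℂ] lp (fun _ : ι => Y) p :=
  ContinuousLinearEquiv.equivOfInverse (lpMap p (e : X →L[ℂ] Y)) (lpMap p (e.symm : Y →L[ℂ] X))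
    (fun f => lp.ext (funext fun i => e.symm_apply_apply (f i)))
    (fun f => lp.ext (funext fun i => e.apply_symm_apply (f i)))

lemma memℓp_pair (f : lp (fun _ : ι => Y) p) (g : lp (fun _ : ι => V) p) :
    Memℓp (fun i => ((f i, g i) : Y × V)) p := by
  have h1 : Memℓp (fun i => ((f i, 0) : Y × V)) p :=
    memℓp_of_norm_le (lp.memℓp f) zero_le_one fun i => by
      rw [one_mul, Prod.norm_def]
      simp [max_le_iff]
  have h2 : Memℓp (fun i => (((0 : Y), g i) : Y × V)) p :=
    memℓp_of_norm_le (lp.memℓp g) zero_le_one fun i => by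
      rw [one_mul, Prod.norm_def]
      simp [max_le_iff]
  have heq : (fun i => ((f i, g i) : Y × V)) =
      (fun i => ((f i, 0) : Y × V)) + fun i => (((0 : Y), g i) : Y × V) := by
    funext i; simp [Prod.ext_iff]
  rw [heq]
  exact h1.add h2

/-- Pairing map into the `lp` sum of a product. -/
noncomputable def lpPair :
    lp (fun _ : ι => Y) p × lp (fun _ : ι => V) p →L[ℂ] lp (fun _ : ι => Y × V) p :=
  ⟨{ toFun := fun fg => ⟨fun i => (fg.1 i, fg.2 i), memℓp_pair p fg.1 fg.2⟩
     map_add' := fun fg fg' => by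
        apply lp.ext; funext i
        show (((fg.1 + fg'.1 : lp _ _) i, (fg.2 + fg'.2 : lp _ _) i) : Y × V) = _
        rw [lp.coeFn_add, lp.coeFn_add]
        show ((fg.1 i + fg'.1 i, fg.2 i + fg'.2 i) : Y × V)
          = ((_ + _ : lp (fun _ : ι => Y × V) p)) i
        rw [lp.coeFn_add]
        rfl
     map_smul' := fun c fg => by
        apply lp.ext; funext i
        show (((c • fg.1 : lp _ _) i, (c • fg.2 : lp _ _) i) : Y × V) = _
        rw [lp.coeFn_smul, lp.coeFn_smul]
        show ((c • fg.1 i, c • fg.2 i) : Y × V)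
          = ((c • (_ : lp (fun _ : ι => Y × V) p)) : lp _ _) i
        rw [lp.coeFn_smul]
        rfl },
   continuous_to_lp _ fun i =>
     (((continuous_eval (p := p) i).comp continuous_fst).prodMk
       ((continuous_eval (p := p) i).comp continuous_snd))⟩

/-- The `lp` sum of products splits as a product of `lp` sums. -/
noncomputable def lpProd :
    lp (fun _ : ι => Y × V) p ≃L[ℂ] lp (fun _ : ι => Y) p × lp (fun _ : ι => V) p :=
  ContinuousLinearEquiv.equivOfInverse
    ((lpMap p (fst ℂ Y V)).prod (lpMap p (snd ℂ Y V)))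
    (lpPair p)
    (fun f => lp.ext (funext fun i => rfl))
    (fun fg => Prod.ext (lp.ext (funext fun i => rfl)) (lp.ext (funext fun i => rfl)))

-- Now the head-splitting of an `lp` sum over `ℕ`.

lemma memℓp_comp_injective {α β : Type*} {f : α → X}
    (hf : Memℓp (fun a : α => f a) p) {j : β → α} (hj : Function.Injective j) :
    Memℓp (fun b : β => f (j b)) p := by
  rcases p_cases (p := p) with hp | hp
  · subst hp
    obtain ⟨M, hM⟩ := hf.bddAbove
    refine memℓp_infty ⟨M, ?_⟩
    rintro _ ⟨b, rfl⟩
    exact hM ⟨j b, rfl⟩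
  · exact memℓp_gen ((hf.summable hp).comp_injective hj)

lemma memℓp_cons (x : X) :
    Memℓp (fun n : ℕ => if n = 0 then x else (0 : X)) p := by
  rcases p_cases (p := p) with hp | hp
  · subst hp
    refine memℓp_infty ⟨‖x‖, ?_⟩
    rintro _ ⟨n, rfl⟩
    dsimp only
    split <;> simp
  · refine memℓp_gen ?_
    refine summable_of_ne_finset_zero (s := ({0} : Finset ℕ)) fun n hn => ?_
    simp only [Finset.mem_singleton] at hn
    simp [hn, Real.zero_rpow hp.ne']

lemma memℓp_shiftR (f : lp (fun _ : ℕ => X) p) :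
    Memℓp (fun n : ℕ => if n = 0 then (0 : X) else f (n - 1)) p := by
  rcases p_cases (p := p) with hp | hp
  · subst hp
    obtain ⟨M, hM⟩ := (lp.memℓp f).bddAbove
    refine memℓp_infty ⟨max M 0, ?_⟩
    rintro _ ⟨n, rfl⟩
    dsimp only
    split
    · simp
    · exact le_max_of_le_left (hM ⟨n - 1, rfl⟩)
  · refine memℓp_gen ?_
    refine (summable_nat_add_iff 1).mp ?_
    have heq : (fun n : ℕ =>
        ‖if n + 1 = 0 then (0 : X) else f (n + 1 - 1)‖ ^ p.toReal) =
        fun n => ‖f n‖ ^ p.toReal := by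
      funext n; simp
    rw [heq]
    exact ((lp.memℓp f).summable hp)

/-- Evaluation at `0`. -/
noncomputable def lpEval0 : lp (fun _ : ℕ => X) p →L[ℂ] X :=
  ⟨{ toFun := fun f => f 0
     map_add' := fun f g => by
        show ((f + g : lp _ _) : ∀ _ : ℕ, X) 0 = f 0 + g 0
        rw [lp.coeFn_add]; rfl
     map_smul' := fun c f => by
        show ((c • f : lp _ _) : ∀ _ : ℕ, X) 0 = c • f 0
        rw [lp.coeFn_smul]; rfl },
   continuous_eval (p := p) 0⟩

/-- The tail map. -/
noncomputable def lpTail : lp (fun _ : ℕ => X) p →L[ℂ] lp (fun _ : ℕ => X) p :=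
  ⟨{ toFun := fun f => ⟨fun n => f (n + 1),
        memℓp_comp_injective p (lp.memℓp f) fun a b hab => by omega⟩
     map_add' := fun f g => by
        apply lp.ext; funext n
        show (f + g : lp _ _) (n + 1) = _
        rw [lp.coeFn_add]
        show f (n + 1) + g (n + 1) = ((_ + _ : lp (fun _ : ℕ => X) p)) n
        rw [lp.coeFn_add]; rfl
     map_smul' := fun c f => by
        apply lp.ext; funext n
        show (c • f : lp _ _) (n + 1) = _
        rw [lp.coeFn_smul]
        show c • f (n + 1) = ((c • (_ : lp (fun _ : ℕ => X) p)) : lp _ _) n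
        rw [lp.coeFn_smul]; rfl },
   continuous_to_lp _ fun n => continuous_eval (p := p) (n + 1)⟩

def consFun (x : X) : lp (fun _ : ℕ => X) p :=
  ⟨fun n => if n = 0 then x else 0, memℓp_cons p x⟩

@[simp] lemma consFun_apply_zero (x : X) : (consFun p x : ∀ _ : ℕ, X) 0 = x := rfl
@[simp] lemma consFun_apply_succ (x : X) (n : ℕ) :
    (consFun p x : ∀ _ : ℕ, X) (n + 1) = 0 := by
  show (if n + 1 = 0 then x else 0) = 0
  simp

def shiftRFun (f : lp (fun _ : ℕ => X) p) : lp (fun _ : ℕ => X) p :=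
  ⟨fun n => if n = 0 then 0 else f (n - 1), memℓp_shiftR p f⟩

@[simp] lemma shiftRFun_apply_zero (f : lp (fun _ : ℕ => X) p) :
    (shiftRFun p f : ∀ _ : ℕ, X) 0 = 0 := rfl
@[simp] lemma shiftRFun_apply_succ (f : lp (fun _ : ℕ => X) p) (n : ℕ) :
    (shiftRFun p f : ∀ _ : ℕ, X) (n + 1) = f n := by
  show (if n + 1 = 0 then 0 else f (n + 1 - 1)) = f n
  simp

/-- Prepend a fixed vector. -/
noncomputable def lpCons : X →L[ℂ] lp (fun _ : ℕ => X) p :=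
  ⟨{ toFun := consFun p
     map_add' := fun x y => by
        apply lp.ext; funext n
        rw [lp.coeFn_add]
        cases n with
        | zero => simp
        | succ k => simp
     map_smul' := fun c x => by
        apply lp.ext; funext n
        rw [lp.coeFn_smul]
        cases n with
        | zero => simp
        | succ k => simp },
   continuous_to_lp _ fun n => by
     by_cases h : n = 0
     · subst h
       exact continuous_id
     · show Continuous fun x : X => if n = 0 then x else 0
       simp only [h, if_false]
       exact continuous_const⟩

@[simp] lemma lpCons_apply_zero (x : X) : (lpCons p x : ∀ _ : ℕ, X) 0 = x := rfl
@[simp] lemma lpCons_apply_succ (x : X) (n : ℕ) :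
    (lpCons p x : ∀ _ : ℕ, X) (n + 1) = 0 := consFun_apply_succ p x n

/-- Shift right, inserting `0` in position `0`. -/
noncomputable def lpShiftR : lp (fun _ : ℕ => X) p →L[ℂ] lp (fun _ : ℕ => X) p :=
  ⟨{ toFun := shiftRFun p
     map_add' := fun f g => by
        apply lp.ext; funext n
        rw [lp.coeFn_add]
        cases n with
        | zero => simp
        | succ k =>
          simp only [shiftRFun_apply_succ, Pi.add_apply]
          rw [lp.coeFn_add]
          rfl
     map_smul' := fun c f => by
        apply lp.ext; funext n
        rw [lp.coeFn_smul]
        cases n with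
        | zero => simp
        | succ k =>
          simp only [shiftRFun_apply_succ, Pi.smul_apply]
          rw [lp.coeFn_smul]
          rfl },
   continuous_to_lp _ fun n => by
     by_cases h : n = 0
     · subst h
       exact continuous_const
     · show Continuous fun f : lp (fun _ : ℕ => X) p => if n = 0 then 0 else f (n - 1)
       simp only [h, if_false]
       exact continuous_eval (p := p) (n - 1)⟩

@[simp] lemma lpShiftR_apply_zero (f : lp (fun _ : ℕ => X) p) :
    (lpShiftR p f : ∀ _ : ℕ, X) 0 = 0 := rfl
@[simp] lemma lpShiftR_apply_succ (f : lp (fun _ : ℕ => X) p) (n : ℕ) :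
    (lpShiftR p f : ∀ _ : ℕ, X) (n + 1) = f n := shiftRFun_apply_succ p f n

/-- Splitting off the head coordinate of an `lp` sum over `ℕ`. -/
noncomputable def lpShift : lp (fun _ : ℕ => X) p ≃L[ℂ] X × lp (fun _ : ℕ => X) p :=
  ContinuousLinearEquiv.equivOfInverse
    ((lpEval0 p).prod (lpTail p))
    ((lpCons p).comp (ContinuousLinearMap.fst ℂ X (lp (fun _ : ℕ => X) p)) +
      (lpShiftR p).comp (ContinuousLinearMap.snd ℂ X (lp (fun _ : ℕ => X) p)))
    (fun f => by
      apply lp.ext; funext n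
      show ((lpCons p (f 0) + lpShiftR p (lpTail p f) : lp (fun _ : ℕ => X) p) : ∀ _ : ℕ, X) n
        = f n
      rw [lp.coeFn_add]
      cases n with
      | zero => simp
      | succ k =>
        simp only [Pi.add_apply, lpCons_apply_succ, lpShiftR_apply_succ, zero_add]
        rfl)
    (fun xf => by
      obtain ⟨x, g⟩ := xf
      refine Prod.ext ?_ ?_
      · show ((lpCons p x + lpShiftR p g : lp (fun _ : ℕ => X) p) : ∀ _ : ℕ, X) 0 = x
        rw [lp.coeFn_add]
        simp
      · apply lp.ext; funext n
        show ((lpCons p x + lpShiftR p g : lp (fun _ : ℕ => X) p) : ∀ _ : ℕ, X) (n + 1) = g n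
        rw [lp.coeFn_add]
        simp)

end Maps

/-- Associativity of products as a continuous linear equivalence. -/
def prodAssocCLE (X Y Z : Type*) [NormedAddCommGroup X] [NormedSpace ℂ X]
    [NormedAddCommGroup Y] [NormedSpace ℂ Y] [NormedAddCommGroup Z] [NormedSpace ℂ Z] :
    ((X × Y) × Z) ≃L[ℂ] (X × (Y × Z)) :=
  { LinearEquiv.prodAssoc ℂ X Y Z with
    continuous_toFun := by
      exact (continuous_fst.comp continuous_fst).prodMk
        ((continuous_snd.comp continuous_fst).prodMk continuous_snd)
    continuous_invFun := by
      exact (continuous_fst.prodMk (continuous_fst.comp continuous_snd)).prodMk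
        (continuous_snd.comp continuous_snd) }

/-- If `R : Y →L X` has a continuous linear right inverse `S`, then `Y ≃ X × ker R`. -/
noncomputable def splitKer {X Y : Type*} [NormedAddCommGroup X] [NormedSpace ℂ X]
    [NormedAddCommGroup Y] [NormedSpace ℂ Y]
    (R : Y →L[ℂ] X) (S : X →L[ℂ] Y) (h : R ∘L S = ContinuousLinearMap.id ℂ X) :
    Y ≃L[ℂ] X × LinearMap.ker (R : Y →ₗ[ℂ] X) := by
  have hRS : ∀ x, R (S x) = x := fun x => by
    simpa using ContinuousLinearMap.ext_iff.mp h x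
  refine ContinuousLinearEquiv.equivOfInverse
    (R.prod ((ContinuousLinearMap.id ℂ Y - S ∘L R).codRestrict (LinearMap.ker (R : Y →ₗ[ℂ] X)) fun y => ?_))
    (S.comp (ContinuousLinearMap.fst ℂ X (LinearMap.ker (R : Y →ₗ[ℂ] X))) +
      (LinearMap.ker (R : Y →ₗ[ℂ] X)).subtypeL.comp (ContinuousLinearMap.snd ℂ X (LinearMap.ker (R : Y →ₗ[ℂ] X))))
    (fun y => ?_) (fun xw => ?_)
  · rw [LinearMap.mem_ker]
    simp [hRS]
  · simp [hRS]
  · obtain ⟨x, w⟩ := xw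
    have hw : R (w : Y) = 0 := w.2
    have hRx : R (S x + (w : Y)) = x := by rw [map_add, hRS, hw, add_zero]
    refine Prod.ext ?_ ?_
    · simpa using hRx
    · apply Subtype.ext
      show (ContinuousLinearMap.id ℂ Y - S ∘L R)
        ((S.comp (ContinuousLinearMap.fst ℂ X (LinearMap.ker (R : Y →ₗ[ℂ] X))) +
          (LinearMap.ker (R : Y →ₗ[ℂ] X)).subtypeL.comp (ContinuousLinearMap.snd ℂ X (LinearMap.ker (R : Y →ₗ[ℂ] X))))
            (x, w)) = (w : Y)
      simp [hRx]

/-- Pełczyński's decomposition method. -/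
lemma pel_key (p : ℝ≥0∞) [Fact (1 ≤ p)] (X Y V W : Type*)
    [NormedAddCommGroup X] [NormedSpace ℂ X] [CompleteSpace X]
    [NormedAddCommGroup Y] [NormedSpace ℂ Y] [CompleteSpace Y]
    [NormedAddCommGroup V] [NormedSpace ℂ V] [CompleteSpace V]
    [NormedAddCommGroup W] [NormedSpace ℂ W]
    (e0 : X ≃L[ℂ] lp (fun _ : ℕ => X) p) (e1 : X ≃L[ℂ] Y × V) (e2 : Y ≃L[ℂ] X × W) :
    Nonempty (X ≃L[ℂ] Y) := by
  let iYV : X ≃L[ℂ] lp (fun _ : ℕ => Y) p × lp (fun _ : ℕ => V) p :=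
    e0.trans ((lpCongr p e1).trans (lpProd p))
  let iX2 : X ≃L[ℂ] X × X :=
    e0.trans ((lpShift p).trans ((ContinuousLinearEquiv.refl ℂ X).prodCongr e0.symm))
  let star : X ≃L[ℂ] Y × X :=
    iYV.trans (((lpShift p (X := Y)).prodCongr
        (ContinuousLinearEquiv.refl ℂ (lp (fun _ : ℕ => V) p))).trans
      ((prodAssocCLE Y (lp (fun _ : ℕ => Y) p) (lp (fun _ : ℕ => V) p)).trans
        ((ContinuousLinearEquiv.refl ℂ Y).prodCongr iYV.symm)))
  let dagger : Y ≃L[ℂ] X × Y :=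
    e2.trans ((iX2.prodCongr (ContinuousLinearEquiv.refl ℂ W)).trans
      ((prodAssocCLE X X W).trans ((ContinuousLinearEquiv.refl ℂ X).prodCongr e2.symm)))
  exact ⟨star.trans ((ContinuousLinearEquiv.prodComm ℂ Y X).trans dagger.symm)⟩

end PelAux

open PelAux in
/-- Pełczyński's criterion. If a complex Banach space `X` is isomorphic to the
`ℓ_p`-sum of countably many copies of itself (`1 ≤ p ≤ ∞`), and for every bounded operator
`T : X → X` the identity factors through `T` or through `I - T`, then `X` is primary. -/
theorem pelczynski_primary_criterion
    (X : Type) [NormedAddCommGroup X] [NormedSpace ℂ X] [CompleteSpace X]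
    (p : ℝ≥0∞) [Fact (1 ≤ p)]
    (hsum : Nonempty (X ≃L[ℂ] lp (fun _ : ℕ => X) p))
    (hfac : ∀ T : X →L[ℂ] X,
      (∃ A B : X →L[ℂ] X, A ∘L T ∘L B = ContinuousLinearMap.id ℂ X) ∨
      (∃ A B : X →L[ℂ] X, A ∘L (ContinuousLinearMap.id ℂ X - T) ∘L B =
        ContinuousLinearMap.id ℂ X)) :
    ∀ (Y Z : Type) [NormedAddCommGroup Y] [NormedSpace ℂ Y] [CompleteSpace Y]
      [NormedAddCommGroup Z] [NormedSpace ℂ Z] [CompleteSpace Z],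
      Nonempty (X ≃L[ℂ] (Y × Z)) →
        Nonempty (X ≃L[ℂ] Y) ∨ Nonempty (X ≃L[ℂ] Z) := by
  intro Y Z _ _ _ _ _ _ hYZ
  obtain ⟨e⟩ := hYZ
  obtain ⟨e0⟩ := hsum
  set T : X →L[ℂ] X :=
    ((e.symm : (Y × Z) →L[ℂ] X).comp ((inl ℂ Y Z).comp (fst ℂ Y Z))).comp
      (e : X →L[ℂ] (Y × Z)) with hT
  have hTx : ∀ x, T x = e.symm ((e x).1, 0) := fun x => by
    rw [hT]; rfl
  have hT'x : ∀ x, (ContinuousLinearMap.id ℂ X - T) x = e.symm (0, (e x).2) := fun x => by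
    apply e.injective
    rw [ContinuousLinearMap.sub_apply, map_sub, hTx, e.apply_symm_apply, e.apply_symm_apply,
      ContinuousLinearMap.id_apply]
    exact Prod.ext (by simp) (by simp)
  rcases hfac T with ⟨A, B, hAB⟩ | ⟨A, B, hAB⟩
  · left
    set R : Y →L[ℂ] X := A.comp ((e.symm : (Y × Z) →L[ℂ] X).comp (inl ℂ Y Z)) with hR
    set S : X →L[ℂ] Y := (fst ℂ Y Z).comp ((e : X →L[ℂ] (Y × Z)).comp B) with hS
    have hRS : R ∘L S = ContinuousLinearMap.id ℂ X := by
      ext x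
      have hx := ContinuousLinearMap.ext_iff.mp hAB x
      rw [ContinuousLinearMap.comp_apply, ContinuousLinearMap.comp_apply, hTx] at hx
      rw [ContinuousLinearMap.comp_apply, hR, hS]
      simpa using hx
    exact pel_key p X Y Z (LinearMap.ker (R : Y →ₗ[ℂ] X)) e0 e (splitKer R S hRS)
  · right
    set R : Z →L[ℂ] X := A.comp ((e.symm : (Y × Z) →L[ℂ] X).comp (inr ℂ Y Z)) with hR
    set S : X →L[ℂ] Z := (snd ℂ Y Z).comp ((e : X →L[ℂ] (Y × Z)).comp B) with hS
    have hRS : R ∘L S = ContinuousLinearMap.id ℂ X := by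
      ext x
      have hx := ContinuousLinearMap.ext_iff.mp hAB x
      rw [ContinuousLinearMap.comp_apply, ContinuousLinearMap.comp_apply, hT'x] at hx
      rw [ContinuousLinearMap.comp_apply, hR, hS]
      simpa using hx
    exact pel_key p X Z Y (LinearMap.ker (R : Z →ₗ[ℂ] X)) e0
      (e.trans (ContinuousLinearEquiv.prodComm ℂ Y Z)) (splitKer R S hRS)
end
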